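/- arXiv:2506.14579 — 5 statements merged into one kernel-verified Lean document; each statement's English description precedes it below -/
import Mathlib

section
/- Let 1 < p < ∞, let Ω ⊂ ℝⁿ be open, f ∈ C¹(ℝ), u ∈ C³(Ω), F a primitive of f, and Q(x) = ((p-1)/p)|∇u(x)|^p + F(u(x)). Then at every point x ∈ Ω with ∇u(x) ≠ 0, the Hessian of u satisfies (with summation over repeated indices) |∇u|^{p−2} · Σ_{i,k} u_{ki}² ≥ (1/((p−1)²|∇u|^p)) · ( |∇Q|² − 2 f(u) u_i Q_i + f(u)² |∇u|² ). -/
open Set Filter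
open scoped BigOperators Topology

noncomputable section

/-- The `i`-th partial derivative of `u` at `x`. -/
def pder {n : ℕ} (i : Fin n) (u : EuclideanSpace ℝ (Fin n) → ℝ)
    (x : EuclideanSpace ℝ (Fin n)) : ℝ :=
  fderiv ℝ u x (EuclideanSpace.single i (1 : ℝ))

/-- The second partial derivative `∂²u/∂xᵢ∂xⱼ` of `u` at `x`. -/
def pder2 {n : ℕ} (i j : Fin n) (u : EuclideanSpace ℝ (Fin n) → ℝ)
    (x : EuclideanSpace ℝ (Fin n)) : ℝ :=
  fderiv ℝ (fun y => pder j u y) x (EuclideanSpace.single i (1 : ℝ))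

/-- The `p`-Laplacian `Δ_p u = div (|∇u|^{p-2} ∇u)` of `u` at `x`, written as the
divergence of the vector field `y ↦ ‖∇u(y)‖^{p-2} ∇u(y)`. -/
def pLaplacian {n : ℕ} (p : ℝ) (u : EuclideanSpace ℝ (Fin n) → ℝ)
    (x : EuclideanSpace ℝ (Fin n)) : ℝ :=
  ∑ i : Fin n,
    fderiv ℝ (fun y => ‖gradient u y‖ ^ (p - 2) * gradient u y i) x
      (EuclideanSpace.single i (1 : ℝ))

/-- `Ω ⊆ ℝⁿ` is a `C¹` domain: a connected open set which near each boundary point is the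
sublevel set of a `C¹` defining function with nonvanishing differential. -/
def IsC1Domain {n : ℕ} (Ω : Set (EuclideanSpace ℝ (Fin n))) : Prop :=
  IsOpen Ω ∧ IsConnected Ω ∧
    ∀ q ∈ frontier Ω,
      ∃ (ρ : EuclideanSpace ℝ (Fin n) → ℝ) (V : Set (EuclideanSpace ℝ (Fin n))),
        q ∈ V ∧ IsOpen V ∧ ContDiffOn ℝ 1 ρ V ∧ (∀ x ∈ V, fderiv ℝ ρ x ≠ 0) ∧
        Ω ∩ V = {x ∈ V | ρ x < 0}

/-- `ν` is the exterior unit normal field of `∂Ω`: at each boundary point it is a unit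
vector pointing instantaneously out of `closure Ω` and, in the opposite direction, into `Ω`. -/
def IsExteriorUnitNormal {n : ℕ} (Ω : Set (EuclideanSpace ℝ (Fin n)))
    (ν : EuclideanSpace ℝ (Fin n) → EuclideanSpace ℝ (Fin n)) : Prop :=
  ∀ q ∈ frontier Ω, ‖ν q‖ = 1 ∧
    ∃ ε > (0 : ℝ), ∀ t ∈ Ioo (0 : ℝ) ε, q + t • ν q ∉ closure Ω ∧ q - t • ν q ∈ Ω

/-- `u` is a `C³` (in `Ω`, `C¹` up to the boundary) solution of the overdetermined
problem (P): `Δ_p u + f(u) = 0` and `u > 0` in `Ω`, `u = 0` and `∂_ν u = -κ` on `∂Ω`. -/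
structure PSolution {n : ℕ} (p : ℝ) (Ω : Set (EuclideanSpace ℝ (Fin n))) (f : ℝ → ℝ)
    (κ : ℝ) (ν : EuclideanSpace ℝ (Fin n) → EuclideanSpace ℝ (Fin n))
    (u : EuclideanSpace ℝ (Fin n) → ℝ) : Prop where
  contDiffOn_int : ContDiffOn ℝ 3 u Ω
  contDiffOn_bd : ContDiffOn ℝ 1 u (closure Ω)
  eqn : ∀ x ∈ Ω, pLaplacian p u x + f (u x) = 0
  pos : ∀ x ∈ Ω, 0 < u x
  dirichlet : ∀ q ∈ frontier Ω, u q = 0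
  neumann : ∀ q ∈ frontier Ω, (inner ℝ (gradient u q) (ν q) : ℝ) = -κ

/-- `F` is a primitive of `f`. -/
def IsPrimitive (F f : ℝ → ℝ) : Prop := ∀ s : ℝ, HasDerivAt F (f s) s

/-- The `Q`-function `Q(x) = ((p-1)/p) |∇u(x)|^p + F(u(x))`. -/
def Qfun {n : ℕ} (p : ℝ) (F : ℝ → ℝ) (u : EuclideanSpace ℝ (Fin n) → ℝ)
    (x : EuclideanSpace ℝ (Fin n)) : ℝ :=
  (p - 1) / p * ‖gradient u x‖ ^ p + F (u x)

/-- Whenever `F u₀ = 0`, one has `F(u) = O(|u - u₀|^p)` as `u → u₀`. -/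
def BigOCond (p : ℝ) (F : ℝ → ℝ) : Prop :=
  ∀ u₀ : ℝ, F u₀ = 0 → Asymptotics.IsBigO (𝓝 u₀) F fun s => |s - u₀| ^ p

/-- `Ω` is an (open) half-space. -/
def IsHalfSpace {n : ℕ} (Ω : Set (EuclideanSpace ℝ (Fin n))) : Prop :=
  ∃ x₀ a : EuclideanSpace ℝ (Fin n), a ≠ 0 ∧ Ω = {x | 0 < (inner ℝ a (x - x₀) : ℝ)}

/-- `Ω` is a slab: the open region between two parallel hyperplanes. -/
def IsSlab {n : ℕ} (Ω : Set (EuclideanSpace ℝ (Fin n))) : Prop :=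
  ∃ (x₀ a : EuclideanSpace ℝ (Fin n)) (z₁ z₂ : ℝ), a ≠ 0 ∧ z₁ < z₂ ∧
    Ω = {x | (inner ℝ a (x - x₀) : ℝ) ∈ Ioo z₁ z₂}

/-- `u` is parallel (`1`-dimensional): `u(x) = g(a · (x - x₀))` on `{a · (x - x₀) > 0}`. -/
def IsParallel {n : ℕ} (u : EuclideanSpace ℝ (Fin n) → ℝ) : Prop :=
  ∃ (x₀ a : EuclideanSpace ℝ (Fin n)) (g : ℝ → ℝ),
    ∀ x : EuclideanSpace ℝ (Fin n), 0 < (inner ℝ a (x - x₀) : ℝ) → u x = g ((inner ℝ a (x - x₀) : ℝ))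

/-- `u` is parallel on `Ω`: `u(x) = g(a · (x - x₀))` for all `x ∈ Ω`. -/
def IsParallelOn {n : ℕ} (Ω : Set (EuclideanSpace ℝ (Fin n)))
    (u : EuclideanSpace ℝ (Fin n) → ℝ) : Prop :=
  ∃ (x₀ a : EuclideanSpace ℝ (Fin n)) (g : ℝ → ℝ), a ≠ 0 ∧
    ∀ x ∈ Ω, u x = g ((inner ℝ a (x - x₀) : ℝ))

/-- `H` is the mean curvature of `∂Ω` with respect to the exterior unit normal `ν`:
`H = div N / (n-1)` on `∂Ω` for some `C¹` unit vector field `N` extending `ν` to a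
neighbourhood of `∂Ω`. -/
def IsMeanCurvature {n : ℕ} (Ω : Set (EuclideanSpace ℝ (Fin n)))
    (ν : EuclideanSpace ℝ (Fin n) → EuclideanSpace ℝ (Fin n))
    (H : EuclideanSpace ℝ (Fin n) → ℝ) : Prop :=
  ∃ (N : EuclideanSpace ℝ (Fin n) → EuclideanSpace ℝ (Fin n))
    (U : Set (EuclideanSpace ℝ (Fin n))),
      IsOpen U ∧ frontier Ω ⊆ U ∧ ContDiffOn ℝ 1 N U ∧ (∀ x ∈ U, ‖N x‖ = 1) ∧
      (∀ q ∈ frontier Ω, N q = ν q) ∧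
      ∀ q ∈ frontier Ω,
        H q = (∑ i : Fin n,
            fderiv ℝ (fun y => N y i) q (EuclideanSpace.single i (1 : ℝ))) / ((n : ℝ) - 1)

set_option maxHeartbeats 1000000 in
/-- estimate (2.5): lower bound for |∇u|^{p-2} Σ u_{ki}² via the gradient of Q. -/
theorem statement_9 (n : ℕ) (p : ℝ) (hp : 1 < p)
    (Ω : Set (EuclideanSpace ℝ (Fin n))) (hΩ : IsOpen Ω)
    (f : ℝ → ℝ) (hf : ContDiff ℝ 1 f)
    (u : EuclideanSpace ℝ (Fin n) → ℝ) (hu : ContDiffOn ℝ 3 u Ω)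
    (F : ℝ → ℝ) (hFf : IsPrimitive F f)
    (x : EuclideanSpace ℝ (Fin n)) (hx : x ∈ Ω) (hgrad : gradient u x ≠ 0) :
    ‖gradient u x‖ ^ (p - 2) *
        (∑ i : Fin n, ∑ k : Fin n, (pder2 k i u x) ^ 2)
      ≥ 1 / ((p - 1) ^ 2 * ‖gradient u x‖ ^ p) *
          ((∑ i : Fin n, (pder i (Qfun p F u) x) ^ 2)
            - 2 * f (u x) * (∑ i : Fin n, pder i u x * pder i (Qfun p F u) x)
            + f (u x) ^ 2 * ‖gradient u x‖ ^ 2) := by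
  classical
  have hcd : ContDiffAt ℝ 3 u x := hu.contDiffAt (hΩ.mem_nhds hx)
  have hdu : DifferentiableAt ℝ u x := hcd.differentiableAt (by norm_num)
  have hfd2 : ContDiffAt ℝ 1 (fderiv ℝ u) x := hcd.fderiv_right (by norm_num)
  set e : (i : Fin n) → EuclideanSpace ℝ (Fin n) := fun i => EuclideanSpace.single i (1:ℝ) with he
  set g := gradient u x with hgdef
  have hr : 0 < ‖g‖ := norm_pos_iff.mpr hgrad
  have hG : DifferentiableAt ℝ (gradient u) x := by
    have h1 : DifferentiableAt ℝ (fderiv ℝ u) x := hfd2.differentiableAt one_ne_zero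
    exact ((InnerProductSpace.toDual ℝ (EuclideanSpace ℝ (Fin n))).symm.toContinuousLinearEquiv.differentiableAt).comp x h1
  set D := fderiv ℝ (gradient u) x with hDdef
  have hGf : HasFDerivAt (gradient u) D x := hG.hasFDerivAt
  -- pder = gradient coordinate
  have hpd : ∀ (y : EuclideanSpace ℝ (Fin n)) (i : Fin n), pder i u y = gradient u y i := by
    intro y i
    have h1 : (inner ℝ (gradient u y) (e i) : ℝ) = fderiv ℝ u y (e i) :=
      InnerProductSpace.toDual_symm_apply
    rw [pder, ← h1, he, EuclideanSpace.inner_single_right]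
    simp
  -- pder2 via D
  have hp2 : ∀ k i : Fin n, pder2 k i u x = D (e k) i := by
    intro k i
    have h1 : (fun y => pder i u y)
        = fun y => (inner ℝ (gradient u y) (EuclideanSpace.single i (1:ℝ)) : ℝ) := by
      funext y
      rw [hpd y i, EuclideanSpace.inner_single_right]; simp
    have hc : HasFDerivAt (fun _ : EuclideanSpace ℝ (Fin n) => EuclideanSpace.single i (1:ℝ))
        (0 : EuclideanSpace ℝ (Fin n) →L[ℝ] EuclideanSpace ℝ (Fin n)) x := hasFDerivAt_const _ _
    have h2 := HasFDerivAt.inner ℝ hGf hc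
    rw [pder2, h1, h2.fderiv]
    simp [ContinuousLinearMap.comp_apply, ContinuousLinearMap.prod_apply, fderivInnerCLM_apply,
      ContinuousLinearMap.zero_apply, inner_zero_right, EuclideanSpace.inner_single_right]
    rfl
  -- derivative of Q
  set t₀ : ℝ := (inner ℝ g g : ℝ) with ht₀
  have ht0 : t₀ = ‖g‖ ^ 2 := real_inner_self_eq_norm_sq g
  have ht0pos : 0 < t₀ := by rw [ht0]; positivity
  have hin : HasFDerivAt (fun y => (inner ℝ (gradient u y) (gradient u y) : ℝ))
      ((fderivInnerCLM ℝ (g, g)).comp (D.prod D)) x := HasFDerivAt.inner ℝ hGf hGf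
  have hrp : HasDerivAt (fun t : ℝ => t ^ (p/2)) (p/2 * t₀ ^ (p/2 - 1)) t₀ :=
    Real.hasDerivAt_rpow_const (Or.inl ht0pos.ne')
  have hcomp := hrp.comp_hasFDerivAt x hin
  have hfun : ((fun t : ℝ => t ^ (p/2)) ∘ (fun y => (inner ℝ (gradient u y) (gradient u y) : ℝ)))
      = fun y => ‖gradient u y‖ ^ p := by
    funext y
    simp only [Function.comp_apply, real_inner_self_eq_norm_sq]
    rw [← Real.rpow_two, ← Real.rpow_mul (norm_nonneg _)]
    congr 1; ring
  rw [hfun] at hcomp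
  have hFu : HasFDerivAt (fun y => F (u y)) (f (u x) • fderiv ℝ u x) x :=
    (hFf (u x)).comp_hasFDerivAt x hdu.hasFDerivAt
  have hQder : HasFDerivAt (Qfun p F u)
      (((p-1)/p) • ((p/2 * t₀ ^ (p/2 - 1)) • ((fderivInnerCLM ℝ (g, g)).comp (D.prod D)))
        + f (u x) • fderiv ℝ u x) x := by
    have := (hcomp.const_mul ((p-1)/p)).add hFu
    exact this
  have hpne : p ≠ 0 := by positivity
  have ht2 : t₀ ^ (p/2 - 1) = ‖g‖ ^ (p - 2) := by
    rw [ht0, ← Real.rpow_two, ← Real.rpow_mul (norm_nonneg _)]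
    congr 1; ring
  have hQi : ∀ i, pder i (Qfun p F u) x
      = (p-1) * ‖g‖ ^ (p-2) * (∑ k, g k * D (e i) k) + f (u x) * pder i u x := by
    intro i
    have hinsum : (inner ℝ g (D (e i)) : ℝ) = ∑ k, g k * D (e i) k := by
      simp [PiLp.inner_apply, RCLike.inner_apply, mul_comm]
    rw [pder, hQder.fderiv]
    simp only [ContinuousLinearMap.add_apply, ContinuousLinearMap.smul_apply,
      ContinuousLinearMap.comp_apply, ContinuousLinearMap.prod_apply, fderivInnerCLM_apply,
      smul_eq_mul]
    simp only [he]
    have hinsum' : (inner ℝ (D (EuclideanSpace.single i (1:ℝ))) g : ℝ)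
        = ∑ k, g k * D (EuclideanSpace.single i (1:ℝ)) k := by
      rw [real_inner_comm]
      simp [PiLp.inner_apply, RCLike.inner_apply, mul_comm]
    have hinsum'' : (inner ℝ g (D (EuclideanSpace.single i (1:ℝ))) : ℝ)
        = ∑ k, g k * D (EuclideanSpace.single i (1:ℝ)) k := by
      simp [PiLp.inner_apply, RCLike.inner_apply, mul_comm]
    rw [hinsum', hinsum'', ht2, show pder i u x = fderiv ℝ u x (EuclideanSpace.single i (1:ℝ)) from rfl]
    field_simp
    ring
  -- sums and Cauchy-Schwarz
  have hgn : (∑ k, g k * g k) = ‖g‖ ^ 2 := by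
    have h := real_inner_self_eq_norm_sq g
    rw [PiLp.inner_apply] at h
    simpa [RCLike.inner_apply, sq] using h
  have hgn2 : (∑ k, (g k) ^ 2) = ‖g‖ ^ 2 := by
    rw [← hgn]; exact Finset.sum_congr rfl fun k _ => sq (g k) ▸ (pow_two (g k))
  have hSeq : (∑ i, ∑ k, (pder2 k i u x) ^ 2) = ∑ i, ∑ k, (D (e i) k) ^ 2 := by
    rw [Finset.sum_comm]
    exact Finset.sum_congr rfl fun k _ => Finset.sum_congr rfl fun i _ => by rw [hp2]
  have hupd : ∀ i, pder i u x = g i := fun i => hpd x i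
  have hsum_eq : (∑ i, (pder i (Qfun p F u) x) ^ 2)
      - 2 * f (u x) * (∑ i, pder i u x * pder i (Qfun p F u) x)
      + f (u x) ^ 2 * ‖g‖ ^ 2
      = ∑ i, (pder i (Qfun p F u) x - f (u x) * pder i u x) ^ 2 := by
    have h1 : (‖g‖:ℝ) ^ 2 = ∑ i, (pder i u x) ^ 2 := by
      rw [← hgn2]; exact Finset.sum_congr rfl fun i _ => by rw [hupd]
    rw [h1]
    simp only [Finset.mul_sum]
    rw [← Finset.sum_sub_distrib, ← Finset.sum_add_distrib]
    exact Finset.sum_congr rfl fun i _ => by ring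
  have hterm : ∀ i, (pder i (Qfun p F u) x - f (u x) * pder i u x) ^ 2
      = ((p-1) * ‖g‖ ^ (p-2)) ^ 2 * (∑ k, g k * D (e i) k) ^ 2 := by
    intro i; rw [hQi i]; ring
  have hcs : ∀ i, (∑ k, g k * D (e i) k) ^ 2 ≤ (‖g‖:ℝ) ^ 2 * ∑ k, (D (e i) k) ^ 2 := by
    intro i
    calc (∑ k, g k * D (e i) k) ^ 2
        ≤ (∑ k, (g k) ^ 2) * ∑ k, (D (e i) k) ^ 2 :=
          Finset.sum_mul_sq_le_sq_mul_sq _ _ _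
      _ = (‖g‖:ℝ) ^ 2 * ∑ k, (D (e i) k) ^ 2 := by rw [hgn2]
  have hA : 0 < (p-1) ^ 2 * ‖g‖ ^ p := by
    have h1 : 0 < ‖g‖ ^ p := Real.rpow_pos_of_pos hr p
    have h2 : (0:ℝ) < (p-1) ^ 2 := by nlinarith
    positivity
  have hp1 : p - 1 ≠ 0 := by linarith
  have key : ‖g‖ ^ (p-2) * ‖g‖ ^ (p-2) * (‖g‖ * ‖g‖) = ‖g‖ ^ p * ‖g‖ ^ (p-2) := by
    have h2 : ‖g‖ * ‖g‖ = ‖g‖ ^ (2:ℝ) := by rw [Real.rpow_two]; ring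
    rw [h2, ← Real.rpow_add hr, ← Real.rpow_add hr, ← Real.rpow_add hr]
    congr 1; ring
  have hcoef : 1 / ((p-1) ^ 2 * ‖g‖ ^ p) * (((p-1) * ‖g‖ ^ (p-2)) ^ 2 * ‖g‖ ^ 2)
      = ‖g‖ ^ (p-2) := by
    have hb : ‖g‖ ^ p ≠ 0 := (Real.rpow_pos_of_pos hr p).ne'
    rw [div_mul_eq_mul_div, one_mul, div_eq_iff (mul_ne_zero (pow_ne_zero 2 hp1) hb)]
    linear_combination (p-1) ^ 2 * key
  rw [ge_iff_le]
  calc 1 / ((p-1) ^ 2 * ‖g‖ ^ p) *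
        ((∑ i, (pder i (Qfun p F u) x) ^ 2)
          - 2 * f (u x) * (∑ i, pder i u x * pder i (Qfun p F u) x)
          + f (u x) ^ 2 * ‖g‖ ^ 2)
      = 1 / ((p-1) ^ 2 * ‖g‖ ^ p) *
          ∑ i, ((p-1) * ‖g‖ ^ (p-2)) ^ 2 * (∑ k, g k * D (e i) k) ^ 2 := by
        rw [hsum_eq]
        congr 1
        exact Finset.sum_congr rfl fun i _ => hterm i
    _ ≤ 1 / ((p-1) ^ 2 * ‖g‖ ^ p) *
          ∑ i, ((p-1) * ‖g‖ ^ (p-2)) ^ 2 * ((‖g‖:ℝ) ^ 2 * ∑ k, (D (e i) k) ^ 2) := by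
        apply mul_le_mul_of_nonneg_left _ (by positivity)
        apply Finset.sum_le_sum
        intro i _
        exact mul_le_mul_of_nonneg_left (hcs i) (by positivity)
    _ = (1 / ((p-1) ^ 2 * ‖g‖ ^ p) * (((p-1) * ‖g‖ ^ (p-2)) ^ 2 * ‖g‖ ^ 2)) *
          ∑ i, ∑ k, (D (e i) k) ^ 2 := by
        have h1 : ∀ i ∈ Finset.univ, ((p-1) * ‖g‖ ^ (p-2)) ^ 2 * ((‖g‖:ℝ) ^ 2 * ∑ k, (D (e i) k) ^ 2)
            = (((p-1) * ‖g‖ ^ (p-2)) ^ 2 * ‖g‖ ^ 2) * ∑ k, (D (e i) k) ^ 2 := fun i _ => by ring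
        rw [Finset.sum_congr rfl h1, ← Finset.mul_sum, ← mul_assoc]
    _ = ‖g‖ ^ (p-2) * ∑ i, ∑ k, (pder2 k i u x) ^ 2 := by rw [hcoef, hSeq]
end
end

section
/- Let 1 < p < ∞, let Ω ⊂ ℝⁿ be open, f ∈ C¹(ℝ), and let u ∈ C³(Ω) satisfy div(|∇u|^{p-2}∇u) + f(u) = 0 in Ω. Let F be a primitive of f and Q(x) = ((p-1)/p)|∇u(x)|^p + F(u(x)). Then at every point x ∈ Ω with ∇u(x) ≠ 0, one has the identity (Einstein summation): (1/(p−1))·ΔQ + ((p−2) u_i u_j/((p−1)|∇u|²))·Q_{ij} = |∇u|^{p−2} Σ_{i,k} u_{ki}² + p(p−2)(Q_i u_i)²/((p−1)²|∇u|^{p+2}) − (p−2)(p+1) f(u) (Q_i u_i)/((p−1)²|∇u|^p) − f(u)²/((p−1)²|∇u|^{p−2}). -/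
open Set Filter
open scoped BigOperators Topology

noncomputable section

lemma grad_coord {n : ℕ} (u : EuclideanSpace ℝ (Fin n) → ℝ)
    (y : EuclideanSpace ℝ (Fin n)) (i : Fin n) : gradient u y i = pder i u y := by
  have h : fderiv ℝ u y (EuclideanSpace.single i (1:ℝ))
      = inner (𝕜 := ℝ) (gradient u y) (EuclideanSpace.single i (1:ℝ)) := by
    simp [gradient]
  rw [pder, h, EuclideanSpace.inner_single_right]
  simp

lemma norm_grad_sq {n : ℕ} (u : EuclideanSpace ℝ (Fin n) → ℝ)
    (y : EuclideanSpace ℝ (Fin n)) : ‖gradient u y‖ ^ 2 = ∑ i, pder i u y ^ 2 := by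
  rw [← real_inner_self_eq_norm_sq]
  rw [PiLp.inner_apply]
  simp [grad_coord, sq]

lemma norm_grad_rpow {n : ℕ} (u : EuclideanSpace ℝ (Fin n) → ℝ)
    (y : EuclideanSpace ℝ (Fin n)) (e : ℝ) :
    ‖gradient u y‖ ^ e = (∑ i, pder i u y ^ 2) ^ (e/2) := by
  rw [← norm_grad_sq]
  rw [← Real.rpow_natCast ‖gradient u y‖ 2, ← Real.rpow_mul (norm_nonneg _)]
  congr 1
  push_cast
  ring


variable {n : ℕ} {u : EuclideanSpace ℝ (Fin n) → ℝ} {y : EuclideanSpace ℝ (Fin n)}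

lemma pder_contDiffAt {m : ℕ} (hu : ContDiffAt ℝ (m+1) u y) (i : Fin n) :
    ContDiffAt ℝ m (pder i u) y :=
  (hu.fderiv_right (by norm_cast)).clm_apply contDiffAt_const

lemma fderiv_pder (hu : ContDiffAt ℝ 2 u y) (i j : Fin n) :
    pder2 i j u y
      = fderiv ℝ (fderiv ℝ u) y (EuclideanSpace.single i 1) (EuclideanSpace.single j 1) := by
  have hc : DifferentiableAt ℝ (fderiv ℝ u) y :=
    (hu.fderiv_right (m := 1) (by norm_num)).differentiableAt (by norm_num)
  have : pder2 i j u y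
      = fderiv ℝ (fun z => (fderiv ℝ u z) ((fun _ => EuclideanSpace.single j (1:ℝ)) z)) y
          (EuclideanSpace.single i 1) := rfl
  rw [this, fderiv_clm_apply hc (differentiableAt_const _)]
  simp

lemma pder2_symm (hu : ContDiffAt ℝ 2 u y) (i j : Fin n) :
    pder2 i j u y = pder2 j i u y := by
  rw [fderiv_pder hu, fderiv_pder hu]
  exact (hu.isSymmSndFDerivAt (by norm_num)) _ _


variable {E : Type*} [NormedAddCommGroup E] [NormedSpace ℝ E]
variable {g h : E → ℝ} {y v : E}

lemma fd_mul (hg : DifferentiableAt ℝ g y) (hh : DifferentiableAt ℝ h y) (v : E) :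
    fderiv ℝ (fun z => g z * h z) y v
      = fderiv ℝ g y v * h y + g y * fderiv ℝ h y v := by
  rw [fderiv_fun_mul hg hh]
  simp
  ring

lemma fd_sum {ι : Type*} (s : Finset ι) {A : ι → E → ℝ}
    (hA : ∀ i ∈ s, DifferentiableAt ℝ (A i) y) (v : E) :
    fderiv ℝ (fun z => ∑ i ∈ s, A i z) y v = ∑ i ∈ s, fderiv ℝ (A i) y v := by
  rw [fderiv_fun_sum hA]
  simp

lemma fd_const_mul (hg : DifferentiableAt ℝ g y) (c : ℝ) (v : E) :
    fderiv ℝ (fun z => c * g z) y v = c * fderiv ℝ g y v := by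
  rw [fderiv_const_mul hg]
  simp

lemma fd_rpow (hg : DifferentiableAt ℝ g y) (h0 : g y ≠ 0) (e : ℝ) (v : E) :
    fderiv ℝ (fun z => g z ^ e) y v = e * g y ^ (e - 1) * fderiv ℝ g y v := by
  have h := ((Real.hasDerivAt_rpow_const (p := e) (Or.inl h0)).comp_hasFDerivAt y
    hg.hasFDerivAt).fderiv
  have h2 : (fun z => g z ^ e) = (fun x : ℝ => x ^ e) ∘ g := rfl
  rw [h2, h, ContinuousLinearMap.smul_apply, smul_eq_mul, mul_assoc]

lemma df_rpow (hg : DifferentiableAt ℝ g y) (h0 : g y ≠ 0) (e : ℝ) :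
    DifferentiableAt ℝ (fun z => g z ^ e) y :=
  ((Real.hasDerivAt_rpow_const (p := e) (Or.inl h0)).comp_hasFDerivAt y
    hg.hasFDerivAt).differentiableAt

lemma fd_comp {φ : ℝ → ℝ} {φ' : ℝ} (hφ : HasDerivAt φ φ' (g y))
    (hg : DifferentiableAt ℝ g y) (v : E) :
    fderiv ℝ (fun z => φ (g z)) y v = φ' * fderiv ℝ g y v := by
  have h2 : (fun z => φ (g z)) = φ ∘ g := rfl
  rw [h2, (hφ.comp_hasFDerivAt y hg.hasFDerivAt).fderiv, ContinuousLinearMap.smul_apply,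
    smul_eq_mul]
lemma fd_add {E : Type*} [NormedAddCommGroup E] [NormedSpace ℝ E] {g h : E → ℝ} {y : E}
    (hg : DifferentiableAt ℝ g y) (hh : DifferentiableAt ℝ h y) (v : E) :
    fderiv ℝ (fun z => g z + h z) y v = fderiv ℝ g y v + fderiv ℝ h y v := by
  rw [fderiv_fun_add hg hh]; simp
namespace PF
variable {n : ℕ}

def pder3 (i j k : Fin n) (u : EuclideanSpace ℝ (Fin n) → ℝ) (x : EuclideanSpace ℝ (Fin n)) : ℝ :=
  fderiv ℝ (pder2 j k u) x (EuclideanSpace.single i (1:ℝ))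

def wfn (u : EuclideanSpace ℝ (Fin n) → ℝ) (y : EuclideanSpace ℝ (Fin n)) : ℝ :=
  ∑ i, pder i u y ^ 2
def gifn (i : Fin n) (u : EuclideanSpace ℝ (Fin n) → ℝ) (y : EuclideanSpace ℝ (Fin n)) : ℝ :=
  ∑ k, pder k u y * pder2 i k u y
def Bfn (u : EuclideanSpace ℝ (Fin n) → ℝ) (y : EuclideanSpace ℝ (Fin n)) : ℝ :=
  ∑ i, pder i u y * gifn i u y
def Tfn (u : EuclideanSpace ℝ (Fin n) → ℝ) (y : EuclideanSpace ℝ (Fin n)) : ℝ :=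
  ∑ i, pder2 i i u y

variable {u : EuclideanSpace ℝ (Fin n) → ℝ} {y : EuclideanSpace ℝ (Fin n)}

lemma pder2_eq_pder_pder (i j : Fin n) : pder2 i j u = pder i (pder j u) := rfl

lemma d_diff (hu : ContDiffAt ℝ 2 u y) (i : Fin n) : DifferentiableAt ℝ (pder i u) y :=
  (pder_contDiffAt (m := 1) (by exact_mod_cast hu) i).differentiableAt (by norm_num)

lemma b_cd (hu : ContDiffAt ℝ 3 u y) (i j : Fin n) : ContDiffAt ℝ 1 (pder2 i j u) y := by
  rw [pder2_eq_pder_pder]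
  exact pder_contDiffAt (m := 1) (pder_contDiffAt (m := 2) (by exact_mod_cast hu) j) i

lemma b_diff (hu : ContDiffAt ℝ 3 u y) (i j : Fin n) :
    DifferentiableAt ℝ (pder2 i j u) y :=
  (b_cd hu i j).differentiableAt (by norm_num)

lemma fd_pder (i j : Fin n) :
    fderiv ℝ (pder j u) y (EuclideanSpace.single i (1:ℝ)) = pder2 i j u y := rfl

lemma fd_pder2 (i j k : Fin n) :
    fderiv ℝ (pder2 j k u) y (EuclideanSpace.single i (1:ℝ)) = pder3 i j k u y := rfl

lemma wfn_eq : wfn u = fun z => ∑ i, pder i u z * pder i u z := by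
  funext z; unfold wfn; exact Finset.sum_congr rfl fun i _ => sq (pder i u z)

lemma w_diff (hu : ContDiffAt ℝ 2 u y) : DifferentiableAt ℝ (wfn u) y := by
  rw [wfn_eq]
  exact DifferentiableAt.fun_sum fun i _ => (d_diff hu i).fun_mul (d_diff hu i)

lemma w_fd (hu : ContDiffAt ℝ 2 u y) (j : Fin n) :
    fderiv ℝ (wfn u) y (EuclideanSpace.single j (1:ℝ)) = 2 * gifn j u y := by
  rw [wfn_eq, fd_sum _ (fun i _ => (d_diff hu i).fun_mul (d_diff hu i)) _]
  unfold gifn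
  rw [Finset.mul_sum]
  refine Finset.sum_congr rfl fun i _ => ?_
  rw [fd_mul (d_diff hu i) (d_diff hu i) _, fd_pder]
  ring

lemma gi_diff (hu : ContDiffAt ℝ 3 u y) (i : Fin n) : DifferentiableAt ℝ (gifn i u) y := by
  unfold gifn
  exact DifferentiableAt.fun_sum fun k _ =>
    (d_diff (hu.of_le (by norm_num)) k).fun_mul (b_diff hu i k)

lemma gi_fd (hu : ContDiffAt ℝ 3 u y) (i j : Fin n) :
    fderiv ℝ (gifn i u) y (EuclideanSpace.single j (1:ℝ))
      = ∑ k, (pder2 j k u y * pder2 i k u y + pder k u y * pder3 j i k u y) := by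
  unfold gifn
  rw [fd_sum _ (fun k _ => (d_diff (hu.of_le (by norm_num)) k).fun_mul (b_diff hu i k)) _]
  refine Finset.sum_congr rfl fun k _ => ?_
  rw [fd_mul (d_diff (hu.of_le (by norm_num)) k) (b_diff hu i k), fd_pder, fd_pder2]

lemma B_diff (hu : ContDiffAt ℝ 3 u y) : DifferentiableAt ℝ (Bfn u) y := by
  unfold Bfn
  exact DifferentiableAt.fun_sum fun i _ =>
    (d_diff (hu.of_le (by norm_num)) i).fun_mul (gi_diff hu i)

lemma B_fd (hu : ContDiffAt ℝ 3 u y) (j : Fin n) :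
    fderiv ℝ (Bfn u) y (EuclideanSpace.single j (1:ℝ))
      = ∑ i, (pder2 j i u y * gifn i u y
          + pder i u y * ∑ k, (pder2 j k u y * pder2 i k u y + pder k u y * pder3 j i k u y)) := by
  unfold Bfn
  rw [fd_sum _ (fun i _ => (d_diff (hu.of_le (by norm_num)) i).fun_mul (gi_diff hu i)) _]
  refine Finset.sum_congr rfl fun i _ => ?_
  rw [fd_mul (d_diff (hu.of_le (by norm_num)) i) (gi_diff hu i), fd_pder, gi_fd hu]

lemma T_diff (hu : ContDiffAt ℝ 3 u y) : DifferentiableAt ℝ (Tfn u) y := by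
  unfold Tfn
  exact DifferentiableAt.fun_sum fun i _ => b_diff hu i i

lemma T_fd (hu : ContDiffAt ℝ 3 u y) (j : Fin n) :
    fderiv ℝ (Tfn u) y (EuclideanSpace.single j (1:ℝ)) = ∑ i, pder3 j i i u y := by
  unfold Tfn
  rw [fd_sum _ (fun i _ => b_diff hu i i) _]
  exact Finset.sum_congr rfl fun i _ => fd_pder2 j i i

lemma pder3_symm12 (hu : ContDiffAt ℝ 3 u y) (i j k : Fin n) :
    pder3 i j k u y = pder3 j i k u y := by
  have hk : ContDiffAt ℝ 2 (pder k u) y :=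
    pder_contDiffAt (m := 2) (by exact_mod_cast hu) k
  have h1 : pder3 i j k u y = pder2 i j (pder k u) y := rfl
  have h2 : pder3 j i k u y = pder2 j i (pder k u) y := rfl
  rw [h1, h2, pder2_symm hk]

lemma pder3_symm23 (hu : ContDiffAt ℝ 3 u y) (i j k : Fin n) :
    pder3 i j k u y = pder3 i k j u y := by
  obtain ⟨s, hs, hcd⟩ : ∃ s ∈ 𝓝 y, ContDiffOn ℝ 2 u s :=
    (hu.of_le (by norm_num)).contDiffOn (m := 2) le_rfl (by simp)
  rcases mem_nhds_iff.1 hs with ⟨t, hts, ht, hyt⟩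
  have hev : pder2 j k u =ᶠ[𝓝 y] pder2 k j u := by
    filter_upwards [ht.mem_nhds hyt] with z hz
    exact pder2_symm ((hcd.mono hts z hz).contDiffAt (ht.mem_nhds hz)) j k
  unfold pder3
  rw [hev.fderiv_eq]

end PF
open PF

set_option maxHeartbeats 2000000

/-- the identity for the elliptic operator applied to Q (equation (2.10)
after the substitutions (2.11)). -/
theorem statement_10 (n : ℕ) (p : ℝ) (hp : 1 < p)
    (Ω : Set (EuclideanSpace ℝ (Fin n))) (hΩ : IsOpen Ω)
    (f : ℝ → ℝ) (hf : ContDiff ℝ 1 f)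
    (u : EuclideanSpace ℝ (Fin n) → ℝ) (hu : ContDiffOn ℝ 3 u Ω)
    (heq : ∀ x ∈ Ω, pLaplacian p u x + f (u x) = 0)
    (F : ℝ → ℝ) (hFf : IsPrimitive F f)
    (x : EuclideanSpace ℝ (Fin n)) (hx : x ∈ Ω) (hgrad : gradient u x ≠ 0) :
    1 / (p - 1) * (∑ i : Fin n, pder2 i i (Qfun p F u) x)
      + (p - 2) / ((p - 1) * ‖gradient u x‖ ^ 2) *
          (∑ i : Fin n, ∑ j : Fin n,
            pder i u x * pder j u x * pder2 i j (Qfun p F u) x)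
    = ‖gradient u x‖ ^ (p - 2) *
        (∑ i : Fin n, ∑ k : Fin n, (pder2 k i u x) ^ 2)
      + p * (p - 2) * (∑ i : Fin n, pder i (Qfun p F u) x * pder i u x) ^ 2 /
          ((p - 1) ^ 2 * ‖gradient u x‖ ^ (p + 2))
      - (p - 2) * (p + 1) * f (u x) *
          (∑ i : Fin n, pder i (Qfun p F u) x * pder i u x) /
          ((p - 1) ^ 2 * ‖gradient u x‖ ^ p)
      - f (u x) ^ 2 / ((p - 1) ^ 2 * ‖gradient u x‖ ^ (p - 2)) := by
  have hp0 : p ≠ 0 := ne_of_gt (by linarith)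
  have hp1 : p - 1 ≠ 0 := sub_ne_zero.2 (ne_of_gt hp)
  have hu3 : ∀ y ∈ Ω, ContDiffAt ℝ 3 u y := fun y hy => hu.contDiffAt (hΩ.mem_nhds hy)
  have hu2 : ∀ y ∈ Ω, ContDiffAt ℝ 2 u y := fun y hy => (hu3 y hy).of_le (by norm_num)
  set U : Set (EuclideanSpace ℝ (Fin n)) := {y | y ∈ Ω ∧ 0 < wfn u y} with hU
  have hxU : x ∈ U := by
    refine ⟨hx, ?_⟩
    have h2 := norm_grad_sq u x
    have hn : 0 < ‖gradient u x‖ := norm_pos_iff.2 hgrad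
    have : 0 < ‖gradient u x‖ ^ 2 := by positivity
    rw [h2] at this
    exact this
  have hUnhds : ∀ y ∈ U, U ∈ 𝓝 y := by
    intro y hy
    have h1 : Ω ∈ 𝓝 y := hΩ.mem_nhds hy.1
    have h2 : {z | 0 < wfn u z} ∈ 𝓝 y := by
      have hc : ContinuousAt (wfn u) y := (w_diff (hu2 y hy.1)).continuousAt
      exact hc.preimage_mem_nhds (isOpen_Ioi.mem_nhds hy.2)
    exact Filter.inter_mem h1 h2
  have hUn : U ∈ 𝓝 x := hUnhds x hxU
  have hwne : ∀ y ∈ U, wfn u y ≠ 0 := fun y hy => ne_of_gt hy.2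
  -- first derivatives of Q
  have hQfun : Qfun p F u = fun y => (p-1)/p * wfn u y ^ (p/2) + F (u y) := by
    funext y
    rw [Qfun, norm_grad_rpow]
    rfl
  have hQ1 : ∀ y ∈ U, ∀ i, pder i (Qfun p F u) y
      = (p-1) * (wfn u y ^ ((p-2)/2) * gifn i u y) + f (u y) * pder i u y := by
    intro y hy i
    have hyd : DifferentiableAt ℝ u y := ((hu2 y hy.1).differentiableAt (by norm_num))
    have hw := w_diff (hu2 y hy.1)
    have hrp := df_rpow hw (hwne y hy) (p/2)
    rw [pder, hQfun]
    have hFu : DifferentiableAt ℝ (fun z => F (u z)) y :=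
      (hFf (u y)).differentiableAt.comp y hyd
    rw [fd_add ((hrp.const_mul _)) hFu]
    rw [fd_const_mul hrp, fd_rpow hw (hwne y hy), w_fd (hu2 y hy.1)]
    rw [fd_comp (hFf (u y)) hyd]
    have : fderiv ℝ u y (EuclideanSpace.single i (1:ℝ)) = pder i u y := rfl
    rw [this]
    have he : p/2 - 1 = (p-2)/2 := by ring
    rw [he]
    field_simp
  -- the PDE in nice form
  have hLap : ∀ y ∈ U,
      (p-2) * (wfn u y ^ ((p-4)/2) * Bfn u y) + wfn u y ^ ((p-2)/2) * Tfn u y = - f (u y) := by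
    intro y hy
    have h0 := heq y hy.1
    have hfun : ∀ i : Fin n, (fun z => ‖gradient u z‖ ^ (p - 2) * gradient u z i)
        = fun z => wfn u z ^ ((p-2)/2) * pder i u z := by
      intro i; funext z
      rw [norm_grad_rpow, grad_coord]
      rfl
    have hw := w_diff (hu2 y hy.1)
    have hrp := df_rpow hw (hwne y hy) ((p-2)/2)
    have hL : pLaplacian p u y
        = ∑ i, ((p-2)/2 * wfn u y ^ ((p-2)/2 - 1) * (2 * gifn i u y) * pder i u y
            + wfn u y ^ ((p-2)/2) * pder2 i i u y) := by
      rw [pLaplacian]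
      refine Finset.sum_congr rfl fun i _ => ?_
      rw [hfun i]
      rw [fd_mul hrp (d_diff (hu2 y hy.1) i), fd_rpow hw (hwne y hy), w_fd (hu2 y hy.1),
        fd_pder]
    rw [hL] at h0
    have he : (p-2)/2 - 1 = (p-4)/2 := by ring
    rw [he] at h0
    have hsum : ∑ i, ((p-2)/2 * wfn u y ^ ((p-4)/2) * (2 * gifn i u y) * pder i u y
            + wfn u y ^ ((p-2)/2) * pder2 i i u y)
        = (p-2) * (wfn u y ^ ((p-4)/2) * Bfn u y) + wfn u y ^ ((p-2)/2) * Tfn u y := by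
      unfold Bfn Tfn
      rw [Finset.sum_add_distrib]
      simp only [Finset.mul_sum]
      congr 1 <;> exact Finset.sum_congr rfl fun i _ => by ring
    rw [hsum] at h0
    linarith
  -- second derivatives of Q
  have hu3x := hu3 x hx
  have hu2x := hu2 x hx
  have hwx := w_diff hu2x
  have hwnex := hwne x hxU
  have hudx : DifferentiableAt ℝ u x := hu2x.differentiableAt (by norm_num)
  have hfd : HasDerivAt f (deriv f (u x)) (u x) :=
    ((hf.differentiable (by norm_num)) (u x)).hasDerivAt
  have hfud : DifferentiableAt ℝ (fun z => f (u z)) x :=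
    ((hf.differentiable (by norm_num)) (u x)).comp x hudx
  have hQ2 : ∀ i j, pder2 i j (Qfun p F u) x
      = (p-1) * (((p-2)/2 * wfn u x ^ ((p-4)/2) * (2 * gifn i u x)) * gifn j u x
          + wfn u x ^ ((p-2)/2) *
            (∑ k, (pder2 i k u x * pder2 j k u x + pder k u x * pder3 i j k u x)))
        + (deriv f (u x) * pder i u x * pder j u x + f (u x) * pder2 i j u x) := by
    intro i j
    have hev : (fun y => pder j (Qfun p F u) y) =ᶠ[𝓝 x]
        (fun y => (p-1) * (wfn u y ^ ((p-2)/2) * gifn j u y) + f (u y) * pder j u y) := by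
      filter_upwards [hUn] with y hy using hQ1 y hy j
    have h1 : pder2 i j (Qfun p F u) x
        = fderiv ℝ (fun y => (p-1) * (wfn u y ^ ((p-2)/2) * gifn j u y) + f (u y) * pder j u y)
            x (EuclideanSpace.single i (1:ℝ)) := by
      rw [pder2, hev.fderiv_eq]
    rw [h1]
    have hrp := df_rpow hwx hwnex ((p-2)/2)
    have hgi := gi_diff hu3x j
    have hdj := d_diff hu2x j
    rw [fd_add ((hrp.fun_mul hgi).const_mul _) (hfud.fun_mul hdj)]
    rw [fd_const_mul (hrp.fun_mul hgi), fd_mul hrp hgi, fd_rpow hwx hwnex, w_fd hu2x,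
      gi_fd hu3x j i, fd_mul hfud hdj, fd_comp hfd hudx, fd_pder]
    have : fderiv ℝ u x (EuclideanSpace.single i (1:ℝ)) = pder i u x := rfl
    rw [this]
    have he : (p-2)/2 - 1 = (p-4)/2 := by ring
    rw [he]
  -- differentiate the PDE
  have hStar : ∀ j,
      (p-2) * (((p-4)/2 * wfn u x ^ ((p-6)/2) * (2 * gifn j u x)) * Bfn u x
        + wfn u x ^ ((p-4)/2) * (∑ i, (pder2 j i u x * gifn i u x
            + pder i u x * ∑ k, (pder2 j k u x * pder2 i k u x + pder k u x * pder3 j i k u x))))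
      + (((p-2)/2 * wfn u x ^ ((p-4)/2) * (2 * gifn j u x)) * Tfn u x
        + wfn u x ^ ((p-2)/2) * (∑ i, pder3 j i i u x))
      = -deriv f (u x) * pder j u x := by
    intro j
    have hev : (fun y => (p-2) * (wfn u y ^ ((p-4)/2) * Bfn u y)
          + wfn u y ^ ((p-2)/2) * Tfn u y) =ᶠ[𝓝 x] (fun y => -f (u y)) := by
      filter_upwards [hUn] with y hy using hLap y hy
    have hrp4 := df_rpow hwx hwnex ((p-4)/2)
    have hrp2 := df_rpow hwx hwnex ((p-2)/2)
    have hB := B_diff hu3x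
    have hT := T_diff hu3x
    have h2 : fderiv ℝ (fun y => -f (u y)) x (EuclideanSpace.single j (1:ℝ))
        = -deriv f (u x) * pder j u x := by
      rw [fd_comp hfd.fun_neg hudx]
      rfl
    rw [← h2, ← hev.fderiv_eq]
    rw [fd_add ((hrp4.fun_mul hB).const_mul _) (hrp2.fun_mul hT)]
    rw [fd_const_mul (hrp4.fun_mul hB), fd_mul hrp4 hB, fd_rpow hwx hwnex, w_fd hu2x,
      B_fd hu3x, fd_mul hrp2 hT, fd_rpow hwx hwnex, w_fd hu2x, T_fd hu3x]
    have he1 : (p-4)/2 - 1 = (p-6)/2 := by ring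
    have he2 : (p-2)/2 - 1 = (p-4)/2 := by ring
    rw [he1, he2]
  -- symmetry at x
  have hbs : ∀ i j, pder2 i j u x = pder2 j i u x := fun i j => pder2_symm hu2x i j
  have hcs12 : ∀ i j k, pder3 i j k u x = pder3 j i k u x := fun i j k => pder3_symm12 hu3x i j k
  have hcs23 : ∀ i j k, pder3 i j k u x = pder3 i k j u x := fun i j k => pder3_symm23 hu3x i j k
  -- key sum collapses
  have keyGi : ∀ k, ∑ j, pder j u x * pder2 j k u x = gifn k u x := by
    intro k
    unfold gifn
    exact Finset.sum_congr rfl fun j _ => by rw [hbs j k]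
  have keyW : ∑ i, pder i u x * pder i u x = wfn u x := by
    unfold wfn
    exact Finset.sum_congr rfl fun i _ => (sq (pder i u x)).symm
  have keyP1 : ∑ i, ∑ k, pder k u x * pder3 i i k u x
      = ∑ j, pder j u x * ∑ i, pder3 j i i u x := by
    rw [Finset.sum_comm]
    refine Finset.sum_congr rfl fun k _ => ?_
    rw [Finset.mul_sum]
    refine Finset.sum_congr rfl fun i _ => ?_
    rw [hcs23 i i k, hcs12 i k i]
  have keyE1 : ∑ j, pder j u x * ∑ i, pder2 j i u x * gifn i u x
      = ∑ i, gifn i u x * gifn i u x := by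
    simp only [Finset.mul_sum]
    rw [Finset.sum_comm]
    refine Finset.sum_congr rfl fun i _ => ?_
    have h1 : ∀ j, pder j u x * (pder2 j i u x * gifn i u x)
        = (pder j u x * pder2 j i u x) * gifn i u x := fun j => by ring
    rw [Finset.sum_congr rfl fun j _ => h1 j, ← Finset.sum_mul, keyGi i]
  have keyE2 : ∑ j, pder j u x * ∑ i, pder i u x * ∑ k, pder2 j k u x * pder2 i k u x
      = ∑ i, gifn i u x * gifn i u x := by
    have h1 : ∀ j, pder j u x * ∑ i, pder i u x * ∑ k, pder2 j k u x * pder2 i k u x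
        = ∑ i, ∑ k, (pder j u x * pder2 j k u x) * (pder i u x * pder2 i k u x) := by
      intro j
      rw [Finset.mul_sum]
      refine Finset.sum_congr rfl fun i _ => ?_
      rw [Finset.mul_sum, Finset.mul_sum]
      exact Finset.sum_congr rfl fun k _ => by ring
    rw [Finset.sum_congr rfl fun j _ => h1 j]
    rw [Finset.sum_congr rfl fun j (_ : j ∈ Finset.univ) => Finset.sum_comm]
    rw [Finset.sum_comm]
    refine Finset.sum_congr rfl fun k _ => ?_
    have h4 : ∀ j, ∑ i, (pder j u x * pder2 j k u x) * (pder i u x * pder2 i k u x)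
        = (pder j u x * pder2 j k u x) * ∑ i, pder i u x * pder2 i k u x :=
      fun j => (Finset.mul_sum _ _ _).symm
    rw [Finset.sum_congr rfl fun j _ => h4 j, ← Finset.sum_mul, keyGi k]
  -- more keys
  have keyB : ∑ j, pder j u x * gifn j u x = Bfn u x := rfl
  have keyB2 : ∑ i, pder i u x * ∑ j, pder j u x * pder2 i j u x = Bfn u x := rfl
  have keyT : ∑ i, pder2 i i u x = Tfn u x := rfl
  have keySx : ∑ i, ∑ k, pder2 i k u x * pder2 i k u x = ∑ i, ∑ k, pder2 k i u x ^ 2 := by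
    rw [Finset.sum_comm]
    exact Finset.sum_congr rfl fun i _ => Finset.sum_congr rfl fun k _ => (sq _).symm
  -- Gamma
  have hGam : ∑ i, pder i (Qfun p F u) x * pder i u x
      = ((p-1) * wfn u x ^ ((p-2)/2)) * Bfn u x + f (u x) * wfn u x := by
    have h1 : ∀ i, pder i (Qfun p F u) x * pder i u x
        = ((p-1) * wfn u x ^ ((p-2)/2)) * (pder i u x * gifn i u x)
          + f (u x) * (pder i u x * pder i u x) := by
      intro i
      rw [hQ1 x hxU i]
      ring
    rw [Finset.sum_congr rfl fun i _ => h1 i]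
    simp only [Finset.sum_add_distrib, ← Finset.mul_sum]
    rw [keyB, keyW]
  -- Laplacian of Q
  have hDelta : ∑ i, pder2 i i (Qfun p F u) x
      = ((p-1)*(p-2) * wfn u x ^ ((p-4)/2)) * (∑ i, gifn i u x * gifn i u x)
        + ((p-1) * wfn u x ^ ((p-2)/2)) * (∑ i, ∑ k, pder2 k i u x ^ 2)
        + ((p-1) * wfn u x ^ ((p-2)/2)) * (∑ j, pder j u x * ∑ i, pder3 j i i u x)
        + deriv f (u x) * wfn u x + f (u x) * Tfn u x := by
    have h1 : ∀ i, pder2 i i (Qfun p F u) x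
        = ((p-1)*(p-2) * wfn u x ^ ((p-4)/2)) * (gifn i u x * gifn i u x)
          + ((p-1) * wfn u x ^ ((p-2)/2)) * (∑ k, pder2 i k u x * pder2 i k u x)
          + ((p-1) * wfn u x ^ ((p-2)/2)) * (∑ k, pder k u x * pder3 i i k u x)
          + deriv f (u x) * (pder i u x * pder i u x) + f (u x) * pder2 i i u x := by
      intro i
      rw [hQ2 i i, Finset.sum_add_distrib]
      ring
    rw [Finset.sum_congr rfl fun i _ => h1 i]
    simp only [Finset.sum_add_distrib, ← Finset.mul_sum]
    rw [keyW, keyP1, keyT, keySx]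
  -- contraction of D2 Q with the gradient
  have hContr : ∑ i, ∑ j, pder i u x * pder j u x * pder2 i j (Qfun p F u) x
      = ((p-1)*(p-2) * wfn u x ^ ((p-4)/2)) * (Bfn u x * Bfn u x)
        + ((p-1) * wfn u x ^ ((p-2)/2)) * (∑ i, gifn i u x * gifn i u x)
        + ((p-1) * wfn u x ^ ((p-2)/2)) *
            (∑ i, pder i u x * ∑ j, pder j u x * ∑ k, pder k u x * pder3 i j k u x)
        + deriv f (u x) * (wfn u x * wfn u x) + f (u x) * Bfn u x := by
    have h1 : ∀ i j, pder i u x * pder j u x * pder2 i j (Qfun p F u) x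
        = ((p-1)*(p-2) * wfn u x ^ ((p-4)/2)) * ((pder i u x * gifn i u x) * (pder j u x * gifn j u x))
          + ((p-1) * wfn u x ^ ((p-2)/2)) * (pder i u x * (pder j u x * ∑ k, pder2 i k u x * pder2 j k u x))
          + ((p-1) * wfn u x ^ ((p-2)/2)) * (pder i u x * (pder j u x * ∑ k, pder k u x * pder3 i j k u x))
          + deriv f (u x) * ((pder i u x * pder i u x) * (pder j u x * pder j u x))
          + f (u x) * (pder i u x * (pder j u x * pder2 i j u x)) := by
      intro i j
      rw [hQ2 i j, Finset.sum_add_distrib]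
      ring
    rw [Finset.sum_congr rfl fun i _ =>
      Finset.sum_congr rfl fun j (_ : j ∈ Finset.univ) => h1 i j]
    simp only [Finset.sum_add_distrib, ← Finset.mul_sum, ← Finset.sum_mul]
    rw [keyB, keyW, keyB2]
    have hE2' : ∑ i, pder i u x * ∑ j, pder j u x * ∑ k, pder2 i k u x * pder2 j k u x
        = ∑ i, gifn i u x * gifn i u x := keyE2
    rw [hE2']
  -- contracted differentiated PDE
  have hStarC :
      ((p-2)*(p-4) * wfn u x ^ ((p-6)/2)) * (Bfn u x * Bfn u x)
        + ((p-2) * wfn u x ^ ((p-4)/2)) * (∑ i, gifn i u x * gifn i u x)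
        + ((p-2) * wfn u x ^ ((p-4)/2)) * (∑ i, gifn i u x * gifn i u x)
        + ((p-2) * wfn u x ^ ((p-4)/2)) *
            (∑ i, pder i u x * ∑ j, pder j u x * ∑ k, pder k u x * pder3 i j k u x)
        + ((p-2) * wfn u x ^ ((p-4)/2) * Tfn u x) * Bfn u x
        + wfn u x ^ ((p-2)/2) * (∑ j, pder j u x * ∑ i, pder3 j i i u x)
      = -deriv f (u x) * wfn u x := by
    have h0 : ∀ j, pder j u x *
        ((p-2) * (((p-4)/2 * wfn u x ^ ((p-6)/2) * (2 * gifn j u x)) * Bfn u x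
          + wfn u x ^ ((p-4)/2) * (∑ i, (pder2 j i u x * gifn i u x
              + pder i u x * ∑ k, (pder2 j k u x * pder2 i k u x + pder k u x * pder3 j i k u x))))
        + (((p-2)/2 * wfn u x ^ ((p-4)/2) * (2 * gifn j u x)) * Tfn u x
          + wfn u x ^ ((p-2)/2) * (∑ i, pder3 j i i u x)))
        = pder j u x * (-deriv f (u x) * pder j u x) := fun j => by rw [hStar j]
    have h1 : ∀ j, pder j u x *
        ((p-2) * (((p-4)/2 * wfn u x ^ ((p-6)/2) * (2 * gifn j u x)) * Bfn u x
          + wfn u x ^ ((p-4)/2) * (∑ i, (pder2 j i u x * gifn i u x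
              + pder i u x * ∑ k, (pder2 j k u x * pder2 i k u x + pder k u x * pder3 j i k u x))))
        + (((p-2)/2 * wfn u x ^ ((p-4)/2) * (2 * gifn j u x)) * Tfn u x
          + wfn u x ^ ((p-2)/2) * (∑ i, pder3 j i i u x)))
        = ((p-2)*(p-4) * wfn u x ^ ((p-6)/2) * Bfn u x) * (pder j u x * gifn j u x)
          + ((p-2) * wfn u x ^ ((p-4)/2)) * (pder j u x * ∑ i, pder2 j i u x * gifn i u x)
          + ((p-2) * wfn u x ^ ((p-4)/2)) *
              (pder j u x * ∑ i, pder i u x * ∑ k, pder2 j k u x * pder2 i k u x)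
          + ((p-2) * wfn u x ^ ((p-4)/2)) *
              (pder j u x * ∑ i, pder i u x * ∑ k, pder k u x * pder3 j i k u x)
          + ((p-2) * wfn u x ^ ((p-4)/2) * Tfn u x) * (pder j u x * gifn j u x)
          + wfn u x ^ ((p-2)/2) * (pder j u x * ∑ i, pder3 j i i u x) := by
      intro j
      have hin : ∀ i, pder2 j i u x * gifn i u x
            + pder i u x * ∑ k, (pder2 j k u x * pder2 i k u x + pder k u x * pder3 j i k u x)
          = pder2 j i u x * gifn i u x
            + (pder i u x * ∑ k, pder2 j k u x * pder2 i k u x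
              + pder i u x * ∑ k, pder k u x * pder3 j i k u x) := by
        intro i
        rw [Finset.sum_add_distrib, mul_add]
      rw [Finset.sum_congr rfl fun i _ => hin i]
      rw [Finset.sum_add_distrib, Finset.sum_add_distrib]
      ring
    have h2 : ∀ j, pder j u x * (-deriv f (u x) * pder j u x)
        = -deriv f (u x) * (pder j u x * pder j u x) := fun j => by ring
    have h3 := Finset.sum_congr rfl fun j (_ : j ∈ Finset.univ) =>
      ((h1 j).symm.trans (h0 j)).trans (h2 j)
    rw [Finset.sum_add_distrib, Finset.sum_add_distrib, Finset.sum_add_distrib,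
      Finset.sum_add_distrib, Finset.sum_add_distrib] at h3
    simp only [← Finset.mul_sum] at h3
    rw [keyB, keyE1, keyE2, keyW] at h3
    rw [← h3]
    ring
    -- final algebra
  have hW : 0 < wfn u x := hxU.2
  have hn2 : ‖gradient u x‖ ^ 2 = wfn u x := norm_grad_sq u x
  have hnp2 : ‖gradient u x‖ ^ (p-2) = wfn u x ^ ((p-2)/2) := norm_grad_rpow u x (p-2)
  have hnp : ‖gradient u x‖ ^ p = wfn u x ^ (p/2) := norm_grad_rpow u x p
  have hnpp : ‖gradient u x‖ ^ (p+2) = wfn u x ^ ((p+2)/2) := norm_grad_rpow u x (p+2)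
  have h2r : wfn u x ^ (2:ℝ) = wfn u x ^ (2:ℕ) := by
    rw [show (2:ℝ) = ((2:ℕ):ℝ) by norm_num, Real.rpow_natCast]
  have hA2 : wfn u x ^ ((p-4)/2) = wfn u x ^ ((p-2)/2) / wfn u x := by
    rw [show (p-4)/2 = (p-2)/2 - 1 by ring, Real.rpow_sub hW, Real.rpow_one]
  have hA3 : wfn u x ^ ((p-6)/2) = wfn u x ^ ((p-2)/2) / wfn u x ^ (2:ℕ) := by
    rw [show (p-6)/2 = (p-2)/2 - 2 by ring, Real.rpow_sub hW, h2r]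
  have hA4 : wfn u x ^ (p/2) = wfn u x ^ ((p-2)/2) * wfn u x := by
    rw [show p/2 = (p-2)/2 + 1 by ring, Real.rpow_add hW, Real.rpow_one]
  have hA5 : wfn u x ^ ((p+2)/2) = wfn u x ^ ((p-2)/2) * wfn u x ^ (2:ℕ) := by
    rw [show (p+2)/2 = (p-2)/2 + 2 by ring, Real.rpow_add hW, h2r]
  have hPDEx := hLap x hxU
  rw [hDelta, hContr, hGam, hn2, hnp2, hnp, hnpp, hA2, hA4, hA5]
  rw [hA2] at hPDEx
  rw [hA2, hA3] at hStarC
  set W := wfn u x with hWdef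
  set A := W ^ ((p-2)/2) with hAdef
  have hApos : 0 < A := Real.rpow_pos_of_pos hW _
  set Bx := Bfn u x with hBdef
  set Tx := Tfn u x with hTdef
  set ff := f (u x) with hfdef
  set fp := deriv f (u x) with hfpdef
  set Ex := ∑ i, gifn i u x * gifn i u x with hEdef
  set Sx := ∑ i, ∑ k, pder2 k i u x ^ 2 with hSdef
  set P1 := ∑ j, pder j u x * ∑ i, pder3 j i i u x with hP1def
  set P2 := ∑ i, pder i u x * ∑ j, pder j u x * ∑ k, pder k u x * pder3 i j k u x with hP2def
  have hTx : Tx = (-ff - (p-2) * (A / W * Bx)) / A := by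
    rw [eq_div_iff hApos.ne']
    linear_combination hPDEx
  have hP1' : P1 = (-fp * W - ((p-2)*(p-4) * (A / W ^ (2:ℕ))) * (Bx * Bx)
      - 2 * ((p-2) * (A / W)) * Ex - ((p-2) * (A / W)) * P2
      - ((p-2) * (A / W) * Tx) * Bx) / A := by
    rw [eq_div_iff hApos.ne']
    linear_combination hStarC
  rw [hTx] at hP1'
  rw [hTx, hP1']
  field_simp
  ring
end
end

section
/- Let 1 < p < ∞, let U ⊂ ℝⁿ be open, and let v ∈ C³(U) satisfy div(|∇v|^{p−2}∇v) = 0 and ∇v(x) ≠ 0 for all x ∈ U. Set a^{ij} = δ^{ij} + (p−2) v_i v_j/|∇v|² and A^{ij} = |∇v|^{p−2} a^{ij}. Then (Einstein summation) ∂_i ( a^{ij} ∂_j (|∇v|^p) ) = p · A^{ij} Σ_k v_{kj} v_{ki} ≥ 0 in U; in particular, |∇v|^p is a subsolution of the uniformly elliptic operator w ↦ ∂_i(a^{ij} ∂_j w). -/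
open Set Filter
open scoped BigOperators Topology

noncomputable section

/-- The coefficient matrix a^{ij} = δ^{ij} + (p-2) v_i v_j / |∇v|². -/
def aCoef {n : ℕ} (p : ℝ) (v : EuclideanSpace ℝ (Fin n) → ℝ) (y : EuclideanSpace ℝ (Fin n)) (i j : Fin n) : ℝ :=
  (if i = j then (1 : ℝ) else 0) + (p - 2) * pder i v y * pder j v y / ‖gradient v y‖ ^ 2

/-- The coefficient matrix A^{ij} = |∇v|^{p-2} a^{ij}. -/
def ACoef {n : ℕ} (p : ℝ) (v : EuclideanSpace ℝ (Fin n) → ℝ) (y : EuclideanSpace ℝ (Fin n)) (i j : Fin n) : ℝ :=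
  ‖gradient v y‖ ^ (p - 2) * aCoef p v y i j

-- ===== auxiliary development =====
namespace S12

variable {n : ℕ}

/-- basis vector -/
def ee {n : ℕ} (i : Fin n) : EuclideanSpace ℝ (Fin n) := EuclideanSpace.single i (1 : ℝ)

/-- squared gradient, expressed through partial derivatives -/
def Wf {n : ℕ} (v : EuclideanSpace ℝ (Fin n) → ℝ) (y : EuclideanSpace ℝ (Fin n)) : ℝ :=
  ∑ k, pder k v y ^ 2

/-- S_k = ∑_j v_j v_{kj} -/
def Sf {n : ℕ} (v : EuclideanSpace ℝ (Fin n) → ℝ) (k : Fin n) (y : EuclideanSpace ℝ (Fin n)) : ℝ :=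
  ∑ j, pder j v y * pder2 k j v y

/-- smooth model of the flux |∇v|^{p-2} v_k -/
def Phi {n : ℕ} (p : ℝ) (v : EuclideanSpace ℝ (Fin n) → ℝ) (k : Fin n)
    (y : EuclideanSpace ℝ (Fin n)) : ℝ :=
  Wf v y ^ ((p - 2) / 2) * pder k v y

variable {p : ℝ} {U : Set (EuclideanSpace ℝ (Fin n))} {v : EuclideanSpace ℝ (Fin n) → ℝ}
  {y x : EuclideanSpace ℝ (Fin n)}

lemma gradient_apply' (u : EuclideanSpace ℝ (Fin n) → ℝ) (y : EuclideanSpace ℝ (Fin n)) (i : Fin n) :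
    gradient u y i = pder i u y := by
  have h : (inner ℝ (gradient u y) (EuclideanSpace.single i (1:ℝ)) : ℝ)
      = fderiv ℝ u y (EuclideanSpace.single i (1:ℝ)) := InnerProductSpace.toDual_symm_apply
  rw [EuclideanSpace.inner_single_right] at h
  simpa [pder] using h

lemma norm_sq_eq (g : EuclideanSpace ℝ (Fin n)) : ‖g‖ ^ 2 = ∑ i, g i ^ 2 := by
  rw [EuclideanSpace.norm_eq, Real.sq_sqrt (by positivity)]
  simp [sq_abs]

lemma Wf_nonneg (v : EuclideanSpace ℝ (Fin n) → ℝ) (y) : 0 ≤ Wf v y :=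
  Finset.sum_nonneg fun _ _ => sq_nonneg _

lemma norm_grad_sq (v : EuclideanSpace ℝ (Fin n) → ℝ) (y) : ‖gradient v y‖ ^ 2 = Wf v y := by
  rw [norm_sq_eq]; unfold Wf; simp [gradient_apply']

lemma norm_grad_rpow (v : EuclideanSpace ℝ (Fin n) → ℝ) (y) (q : ℝ) :
    ‖gradient v y‖ ^ q = Wf v y ^ (q / 2) := by
  have h1 : ‖gradient v y‖ = Real.sqrt (Wf v y) := by
    rw [← norm_grad_sq v y, Real.sqrt_sq (norm_nonneg _)]
  rw [h1, Real.sqrt_eq_rpow, ← Real.rpow_mul (Wf_nonneg v y)]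
  congr 1; ring

lemma Wf_pos (hg : gradient v y ≠ 0) : 0 < Wf v y := by
  rw [← norm_grad_sq v y]
  have : 0 < ‖gradient v y‖ := norm_pos_iff.mpr hg
  positivity

section Diff
variable (hU : IsOpen U) (hv : ContDiffOn ℝ 3 v U) (hy : y ∈ U)
include hU hv hy

omit hy in
lemma pder_contDiffOn (i : Fin n) : ContDiffOn ℝ 2 (fun y => pder i v y) U :=
  (hv.fderiv_of_isOpen hU (by norm_num)).clm_apply contDiffOn_const

lemma pder_contDiffAt (i : Fin n) : ContDiffAt ℝ 2 (fun y => pder i v y) y :=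
  (pder_contDiffOn hU hv i).contDiffAt (hU.mem_nhds hy)

lemma pder_diffAt (i : Fin n) : DifferentiableAt ℝ (fun y => pder i v y) y :=
  (pder_contDiffAt hU hv hy i).differentiableAt (by norm_num)

lemma Wf_contDiffAt : ContDiffAt ℝ 2 (Wf v) y :=
  ContDiffAt.sum fun k _ => (pder_contDiffAt hU hv hy k).pow 2

lemma pder2_symm (i j : Fin n) : pder2 i j v y = pder2 j i v y := by
  have hdiff : DifferentiableAt ℝ (fderiv ℝ v) y :=
    ((hv.fderiv_of_isOpen (m := 2) hU (by norm_num)).contDiffAt (hU.mem_nhds hy)).differentiableAt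
      (by norm_num)
  have hsym := (hv.contDiffAt (hU.mem_nhds hy)).isSymmSndFDerivAt (by norm_num)
  have key : ∀ a b : Fin n, pder2 a b v y = fderiv ℝ (fderiv ℝ v) y (ee a) (ee b) := by
    intro a b
    show fderiv ℝ (fun z => (fderiv ℝ v z) (ee b)) y (ee a) = _
    rw [fderiv_clm_apply hdiff (differentiableAt_const _)]
    simp
  rw [key, key]; exact hsym _ _

lemma hasFDerivAt_Wf : HasFDerivAt (Wf v)
    (∑ k, (2 * pder k v y) • fderiv ℝ (fun z => pder k v z) y) y := by
  have h : ∀ k : Fin n, HasFDerivAt (fun z => pder k v z ^ 2)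
      ((2 * pder k v y) • fderiv ℝ (fun z => pder k v z) y) y := by
    intro k
    have hk := (pder_diffAt hU hv hy k).hasFDerivAt
    simpa [pow_two, two_mul, add_smul] using hk.fun_mul hk
  exact HasFDerivAt.fun_sum fun k _ => h k

lemma fderiv_Wf_apply (i : Fin n) : fderiv ℝ (Wf v) y (ee i) = 2 * Sf v i y := by
  rw [(hasFDerivAt_Wf hU hv hy).fderiv]
  simp only [ContinuousLinearMap.coe_sum', Finset.sum_apply, ContinuousLinearMap.coe_smul',
    Pi.smul_apply, smul_eq_mul]
  rw [Sf, Finset.mul_sum]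
  exact Finset.sum_congr rfl fun j _ => by rw [pder2]; simp only [ee]; ring

end Diff


section Phi
variable (hU : IsOpen U) (hv : ContDiffOn ℝ 3 v U) (hy : y ∈ U) (hg : gradient v y ≠ 0)

/-- the derivative of Wf as a CLM -/
def LW (v : EuclideanSpace ℝ (Fin n) → ℝ) (y : EuclideanSpace ℝ (Fin n)) :
    EuclideanSpace ℝ (Fin n) →L[ℝ] ℝ :=
  ∑ k, (2 * pder k v y) • fderiv ℝ (fun z => pder k v z) y

lemma LW_apply (i : Fin n) : LW v y (ee i) = 2 * Sf v i y := by
  simp only [LW, ContinuousLinearMap.coe_sum', Finset.sum_apply, ContinuousLinearMap.coe_smul',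
    Pi.smul_apply, smul_eq_mul]
  rw [Sf, Finset.mul_sum]
  exact Finset.sum_congr rfl fun j _ => by rw [pder2]; simp only [ee]; ring

include hU hv hy in
lemma hasFDerivAt_Wf' : HasFDerivAt (Wf v) (LW v y) y := hasFDerivAt_Wf hU hv hy

include hU hv hy hg in
lemma hasFDerivAt_rpowW (c : ℝ) : HasFDerivAt (fun z => Wf v z ^ c)
    ((c * Wf v y ^ (c - 1)) • LW v y) y := by
  have hW := hasFDerivAt_Wf' hU hv hy
  have hp : HasDerivAt (fun t : ℝ => t ^ c) (c * Wf v y ^ (c - 1)) (Wf v y) :=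
    Real.hasDerivAt_rpow_const (Or.inl (ne_of_gt (Wf_pos hg)))
  simpa [Function.comp_def] using hp.comp_hasFDerivAt y hW

include hU hv hy hg in
lemma hasFDerivAt_Phi (k : Fin n) : HasFDerivAt (Phi p v k)
    ((Wf v y ^ ((p - 2) / 2)) • fderiv ℝ (fun z => pder k v z) y
      + pder k v y • (((p - 2) / 2 * Wf v y ^ ((p - 2) / 2 - 1)) • LW v y)) y :=
  (hasFDerivAt_rpowW hU hv hy hg ((p - 2) / 2)).mul (pder_diffAt hU hv hy k).hasFDerivAt

include hU hv hy hg in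
lemma fderiv_Phi_apply (i k : Fin n) : fderiv ℝ (Phi p v k) y (ee i)
    = Wf v y ^ ((p - 2) / 2) * pder2 i k v y
      + (p - 2) * Wf v y ^ ((p - 2) / 2 - 1) * Sf v i y * pder k v y := by
  rw [(hasFDerivAt_Phi hU hv hy hg k).fderiv]
  simp only [ContinuousLinearMap.add_apply, ContinuousLinearMap.coe_smul', Pi.smul_apply,
    smul_eq_mul, LW_apply]
  rw [pder2]; simp only [ee]; ring

include hU hv hy hg in
lemma Phi_contDiffAt (k : Fin n) : ContDiffAt ℝ 2 (Phi p v k) y :=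
  ((Real.contDiffAt_rpow_const_of_ne (ne_of_gt (Wf_pos hg))).comp y
    (Wf_contDiffAt hU hv hy)).mul (pder_contDiffAt hU hv hy k)

include hU hv hy hg in
lemma psi_diffAt (i k : Fin n) :
    DifferentiableAt ℝ (fun z => fderiv ℝ (Phi p v k) z (ee i)) y := by
  have h1 : DifferentiableAt ℝ (fderiv ℝ (Phi p v k)) y :=
    ((Phi_contDiffAt hU hv hy hg k).fderiv_right (m := 1) (by norm_num)).differentiableAt one_ne_zero
  exact h1.clm_apply (differentiableAt_const _)

include hU hv hy hg in
lemma psi_symm (i l k : Fin n) :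
    fderiv ℝ (fun z => fderiv ℝ (Phi p v k) z (ee i)) y (ee l)
      = fderiv ℝ (fun z => fderiv ℝ (Phi p v k) z (ee l)) y (ee i) := by
  have h1 : DifferentiableAt ℝ (fderiv ℝ (Phi p v k)) y :=
    ((Phi_contDiffAt hU hv hy hg k).fderiv_right (m := 1) (by norm_num)).differentiableAt one_ne_zero
  have hsym : IsSymmSndFDerivAt ℝ (Phi p v k) y :=
    (Phi_contDiffAt hU hv hy hg k).isSymmSndFDerivAt (by simp)
  have key : ∀ a b : Fin n, fderiv ℝ (fun z => fderiv ℝ (Phi p v k) z (ee b)) y (ee a)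
      = fderiv ℝ (fderiv ℝ (Phi p v k)) y (ee a) (ee b) := by
    intro a b
    rw [fderiv_clm_apply h1 (differentiableAt_const _)]
    simp
  rw [key, key]; exact hsym _ _

include hU hy in
lemma flux_eventuallyEq (k : Fin n) :
    (fun z => ‖gradient v z‖ ^ (p - 2) * gradient v z k) =ᶠ[𝓝 y] Phi p v k := by
  filter_upwards [hU.mem_nhds hy] with z _
  rw [norm_grad_rpow, gradient_apply', Phi]

include hU hy in
lemma sigma_p_eventuallyEq :
    (fun z => ‖gradient v z‖ ^ p) =ᶠ[𝓝 y] fun z => Wf v z ^ (p / 2) := by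
  filter_upwards [hU.mem_nhds hy] with z _
  rw [norm_grad_rpow]

include hU hv hy hg in
lemma pder_sigma_p (j : Fin n) :
    pder j (fun z => ‖gradient v z‖ ^ p) y = p * Wf v y ^ ((p - 2) / 2) * Sf v j y := by
  have : pder j (fun z => ‖gradient v z‖ ^ p) y
      = fderiv ℝ (fun z => Wf v z ^ (p / 2)) y (ee j) := by
    rw [pder, (sigma_p_eventuallyEq hU hy).fderiv_eq]; rfl
  rw [this, (hasFDerivAt_rpowW hU hv hy hg (p / 2)).fderiv]
  simp only [ContinuousLinearMap.coe_smul', Pi.smul_apply, smul_eq_mul, LW_apply]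
  rw [show (p / 2 - 1 : ℝ) = (p - 2) / 2 by ring]
  ring

include hU hy in
omit hv in
lemma Efun_eq_zero (hph : ∀ x ∈ U, pLaplacian p v x = 0) :
    ∑ i, fderiv ℝ (Phi p v i) y (ee i) = 0 := by
  have h := hph y hy
  rw [pLaplacian] at h
  rw [← h]
  exact Finset.sum_congr rfl fun i _ => by
    rw [(flux_eventuallyEq hU hy i).fderiv_eq]; rfl


include hU hv hy in
omit hg in
lemma sum_pder2_eq_Sf (i : Fin n) : ∑ k, pder k v y * pder2 k i v y = Sf v i y := by
  rw [Sf]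
  exact Finset.sum_congr rfl fun j _ => by rw [pder2_symm hU hv hy]

include hU hv hy hg in
lemma inner_model (i : Fin n) :
    ∑ j, aCoef p v y i j * pder j (fun z => ‖gradient v z‖ ^ p) y
      = p * ∑ k, pder k v y * fderiv ℝ (Phi p v i) y (ee k) := by
  have hWpos := Wf_pos hg
  set Wc := Wf v y ^ ((p - 2) / 2) with hWcdef
  have hWc1 : Wf v y ^ ((p - 2) / 2 - 1) = Wc / Wf v y := by
    rw [hWcdef, Real.rpow_sub hWpos, Real.rpow_one]
  have hL : ∀ j, aCoef p v y i j * pder j (fun z => ‖gradient v z‖ ^ p) y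
      = (if i = j then (1:ℝ) else 0) * (p * Wc * Sf v j y)
        + (p - 2) * pder i v y * p * Wc / Wf v y * (pder j v y * Sf v j y) := by
    intro j
    rw [aCoef, pder_sigma_p hU hv hy hg, norm_grad_sq]
    ring
  have e3 : ∀ k, pder k v y * fderiv ℝ (Phi p v i) y (ee k)
      = Wc * (pder k v y * pder2 k i v y)
        + (p - 2) * pder i v y * Wc / Wf v y * (pder k v y * Sf v k y) := by
    intro k
    rw [fderiv_Phi_apply hU hv hy hg k i, hWc1]
    ring
  rw [Finset.sum_congr rfl fun j _ => hL j, Finset.sum_congr rfl fun k _ => e3 k,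
    Finset.sum_add_distrib, Finset.sum_add_distrib, ← Finset.mul_sum, ← Finset.mul_sum,
    ← Finset.mul_sum, sum_pder2_eq_Sf hU hv hy, mul_add]
  simp only [ite_mul, one_mul, zero_mul, Finset.sum_ite_eq, Finset.mem_univ, if_true]
  ring

omit hU hv hy hg in
lemma ACoef_eq (i j : Fin n) : ACoef p v y i j
    = Wf v y ^ ((p - 2) / 2) * (if i = j then (1:ℝ) else 0)
      + (p - 2) * Wf v y ^ ((p - 2) / 2) / Wf v y * (pder i v y * pder j v y) := by
  rw [ACoef, aCoef, norm_grad_rpow, norm_grad_sq]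
  ring

omit hU hv hy hg in
lemma rhs_canonical :
    ∑ i, ∑ j, ACoef p v y i j * ∑ k, pder2 k j v y * pder2 k i v y
      = ∑ k, (Wf v y ^ ((p - 2) / 2) * ∑ i, pder2 k i v y ^ 2
          + (p - 2) * Wf v y ^ ((p - 2) / 2) / Wf v y * Sf v k y ^ 2) := by
  set Wc := Wf v y ^ ((p - 2) / 2) with hWcdef
  set cc := (p - 2) * Wc / Wf v y with hccdef
  have key : ∀ i j : Fin n, ACoef p v y i j * (∑ k, pder2 k j v y * pder2 k i v y)
      = ∑ k, (Wc * ((if i = j then (1:ℝ) else 0) * (pder2 k j v y * pder2 k i v y))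
          + cc * ((pder i v y * pder2 k i v y) * (pder j v y * pder2 k j v y))) := by
    intro i j
    rw [ACoef_eq i j, Finset.mul_sum]
    exact Finset.sum_congr rfl fun k _ => by ring
  rw [Finset.sum_congr rfl fun i (_ : i ∈ Finset.univ) =>
    Finset.sum_congr rfl fun j (_ : j ∈ Finset.univ) => key i j]
  rw [Finset.sum_congr rfl fun i (_ : i ∈ Finset.univ) =>
    Finset.sum_comm (s := Finset.univ) (t := Finset.univ), Finset.sum_comm]
  refine Finset.sum_congr rfl fun k _ => ?_
  rw [Finset.sum_congr rfl fun i (_ : i ∈ Finset.univ) => Finset.sum_add_distrib,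
    Finset.sum_add_distrib]
  congr 1
  · rw [Finset.mul_sum]
    refine Finset.sum_congr rfl fun i _ => ?_
    simp only [mul_ite, ite_mul, mul_zero, zero_mul, Finset.sum_ite_eq, Finset.mem_univ, if_true]
    ring
  · have : ∀ i : Fin n, ∑ j, cc * ((pder i v y * pder2 k i v y) * (pder j v y * pder2 k j v y))
        = cc * (pder i v y * pder2 k i v y) * Sf v k y := by
      intro i
      rw [Sf, Finset.mul_sum]
      exact Finset.sum_congr rfl fun j _ => by ring
    rw [Finset.sum_congr rfl fun i (_ : i ∈ Finset.univ) => this i]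
    rw [Sf, ← Finset.sum_mul, ← Finset.mul_sum]
    ring

include hU hv hy hg in
lemma lhs_canonical :
    ∑ i, ∑ k, pder2 i k v y * fderiv ℝ (Phi p v i) y (ee k)
      = ∑ k, (Wf v y ^ ((p - 2) / 2) * ∑ i, pder2 k i v y ^ 2
          + (p - 2) * Wf v y ^ ((p - 2) / 2) / Wf v y * Sf v k y ^ 2) := by
  have hWpos := Wf_pos hg
  set Wc := Wf v y ^ ((p - 2) / 2) with hWcdef
  have hWc1 : Wf v y ^ ((p - 2) / 2 - 1) = Wc / Wf v y := by
    rw [hWcdef, Real.rpow_sub hWpos, Real.rpow_one]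
  rw [Finset.sum_comm]
  refine Finset.sum_congr rfl fun k _ => ?_
  have hterm : ∀ i, pder2 i k v y * fderiv ℝ (Phi p v i) y (ee k)
      = Wc * pder2 k i v y ^ 2
        + ((p - 2) * Wc / Wf v y * Sf v k y) * (pder i v y * pder2 k i v y) := by
    intro i
    rw [fderiv_Phi_apply hU hv hy hg k i, hWc1, pder2_symm hU hv hy i k]
    ring
  rw [Finset.sum_congr rfl fun i (_ : i ∈ Finset.univ) => hterm i, Finset.sum_add_distrib,
    ← Finset.mul_sum, ← Finset.mul_sum]
  have hSf : ∑ i, pder i v y * pder2 k i v y = Sf v k y := rfl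
  rw [hSf]
  ring


include hg in
omit hU hv hy in
lemma per_k_nonneg (hp : 1 < p) (k : Fin n) :
    0 ≤ Wf v y ^ ((p - 2) / 2) * ∑ i, pder2 k i v y ^ 2
        + (p - 2) * Wf v y ^ ((p - 2) / 2) / Wf v y * Sf v k y ^ 2 := by
  have hWpos := Wf_pos hg
  have hWc : 0 < Wf v y ^ ((p - 2) / 2) := Real.rpow_pos_of_pos hWpos _
  set Wc := Wf v y ^ ((p - 2) / 2)
  set Q := ∑ i, pder2 k i v y ^ 2 with hQ
  have hQ0 : 0 ≤ Q := Finset.sum_nonneg fun _ _ => sq_nonneg _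
  rcases le_or_gt 2 p with h2 | h2
  · have h1 : 0 ≤ (p - 2) * Wc / Wf v y :=
      div_nonneg (mul_nonneg (by linarith) hWc.le) hWpos.le
    exact add_nonneg (mul_nonneg hWc.le hQ0) (mul_nonneg h1 (sq_nonneg _))
  · have hCS : Sf v k y ^ 2 ≤ Wf v y * Q := by
      have h := Finset.sum_mul_sq_le_sq_mul_sq Finset.univ (fun j => pder j v y)
        (fun j => pder2 k j v y)
      simpa [Sf, Wf, hQ] using h
    have hneg : (p - 2) * Wc / Wf v y ≤ 0 :=
      div_nonpos_of_nonpos_of_nonneg (mul_nonpos_of_nonpos_of_nonneg (by linarith) hWc.le)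
        hWpos.le
    have h1 : (p - 2) * Wc / Wf v y * (Wf v y * Q) ≤ (p - 2) * Wc / Wf v y * Sf v k y ^ 2 :=
      mul_le_mul_of_nonpos_left hCS hneg
    have h2' : (p - 2) * Wc / Wf v y * (Wf v y * Q) = (p - 2) * (Wc * Q) := by
      field_simp
    have h3 : 0 ≤ (p - 1) * (Wc * Q) :=
      mul_nonneg (by linarith) (mul_nonneg hWc.le hQ0)
    nlinarith [h1, h2', h3]

end Phi
end S12

/-- for a p-harmonic function with nonvanishing gradient,
∂_i(a^{ij} ∂_j(|∇v|^p)) = p A^{ij} v_{kj} v_{ki} ≥ 0, i.e. |∇v|^p is a subsolution. -/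
theorem statement_12 (n : ℕ) (p : ℝ) (hp : 1 < p)
    (U : Set (EuclideanSpace ℝ (Fin n))) (hU : IsOpen U)
    (v : EuclideanSpace ℝ (Fin n) → ℝ) (hv : ContDiffOn ℝ 3 v U)
    (hph : ∀ x ∈ U, pLaplacian p v x = 0)
    (hgrad : ∀ x ∈ U, gradient v x ≠ 0) :
    ∀ x ∈ U,
      (∑ i : Fin n,
          fderiv ℝ (fun y => ∑ j : Fin n,
              aCoef p v y i j * pder j (fun z => ‖gradient v z‖ ^ p) y) x
            (EuclideanSpace.single i (1 : ℝ)))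
        = p * ∑ i : Fin n, ∑ j : Fin n,
            ACoef p v x i j * ∑ k : Fin n, pder2 k j v x * pder2 k i v x ∧
      0 ≤ p * ∑ i : Fin n, ∑ j : Fin n,
            ACoef p v x i j * ∑ k : Fin n, pder2 k j v x * pder2 k i v x := by
  intro x hx
  have hgx := hgrad x hx
  have hnonneg : 0 ≤ p * ∑ i : Fin n, ∑ j : Fin n,
      ACoef p v x i j * ∑ k : Fin n, pder2 k j v x * pder2 k i v x := by
    rw [S12.rhs_canonical (p := p) (v := v) (y := x)]
    exact mul_nonneg (by linarith)
      (Finset.sum_nonneg fun k _ => S12.per_k_nonneg hgx hp k)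
  refine ⟨?_, hnonneg⟩
  have hψd : ∀ i k : Fin n,
      DifferentiableAt ℝ (fun z => fderiv ℝ (S12.Phi p v i) z (S12.ee k)) x :=
    fun i k => S12.psi_diffAt hU hv hx hgx k i
  have hd1 : ∀ k : Fin n, DifferentiableAt ℝ (fun z => pder k v z) x :=
    fun k => S12.pder_diffAt hU hv hx k
  have hstep1 : ∀ i : Fin n,
      fderiv ℝ (fun y => ∑ j : Fin n,
          aCoef p v y i j * pder j (fun z => ‖gradient v z‖ ^ p) y) x
        = fderiv ℝ (fun y => p * ∑ k, pder k v y * fderiv ℝ (S12.Phi p v i) y (S12.ee k)) x := by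
    intro i
    apply Filter.EventuallyEq.fderiv_eq
    filter_upwards [hU.mem_nhds hx] with z hz
    exact S12.inner_model hU hv hz (hgrad z hz) i
  have hstep2 : ∀ i : Fin n,
      fderiv ℝ (fun y => p * ∑ k, pder k v y * fderiv ℝ (S12.Phi p v i) y (S12.ee k)) x (S12.ee i)
        = p * ∑ k, (pder2 i k v x * fderiv ℝ (S12.Phi p v i) x (S12.ee k)
            + pder k v x * fderiv ℝ (fun z => fderiv ℝ (S12.Phi p v i) z (S12.ee k)) x (S12.ee i)) := by
    intro i
    have hsum : DifferentiableAt ℝ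
        (fun y => ∑ k, pder k v y * fderiv ℝ (S12.Phi p v i) y (S12.ee k)) x :=
      DifferentiableAt.fun_sum fun k _ => (hd1 k).fun_mul (hψd i k)
    rw [fderiv_const_mul hsum p, ContinuousLinearMap.smul_apply, smul_eq_mul,
      fderiv_fun_sum (fun k _ => (hd1 k).fun_mul (hψd i k)), ContinuousLinearMap.sum_apply]
    congr 1
    refine Finset.sum_congr rfl fun k _ => ?_
    rw [fderiv_fun_mul (hd1 k) (hψd i k), ContinuousLinearMap.add_apply,
      ContinuousLinearMap.smul_apply, ContinuousLinearMap.smul_apply, smul_eq_mul, smul_eq_mul]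
    have hrfl : fderiv ℝ (fun z => pder k v z) x (S12.ee i) = pder2 i k v x := rfl
    rw [hrfl]
    ring
  have hvanish : ∀ k : Fin n,
      ∑ i, fderiv ℝ (fun z => fderiv ℝ (S12.Phi p v i) z (S12.ee k)) x (S12.ee i) = 0 := by
    intro k
    have hswap : ∀ i : Fin n,
        fderiv ℝ (fun z => fderiv ℝ (S12.Phi p v i) z (S12.ee k)) x (S12.ee i)
          = fderiv ℝ (fun z => fderiv ℝ (S12.Phi p v i) z (S12.ee i)) x (S12.ee k) :=
      fun i => S12.psi_symm hU hv hx hgx k i i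
    rw [Finset.sum_congr rfl fun i _ => hswap i]
    rw [show ∑ i, fderiv ℝ (fun z => fderiv ℝ (S12.Phi p v i) z (S12.ee i)) x (S12.ee k)
        = fderiv ℝ (fun z => ∑ i, fderiv ℝ (S12.Phi p v i) z (S12.ee i)) x (S12.ee k) by
      rw [fderiv_fun_sum (fun i _ => S12.psi_diffAt hU hv hx hgx i i), ContinuousLinearMap.sum_apply]]
    have h0 : (fun z => ∑ i, fderiv ℝ (S12.Phi p v i) z (S12.ee i)) =ᶠ[𝓝 x]
        (fun _ => (0 : ℝ)) := by
      filter_upwards [hU.mem_nhds hx] with z hz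
      exact S12.Efun_eq_zero hU hz hph
    rw [h0.fderiv_eq]
    simp
  have hee : ∀ i : Fin n, EuclideanSpace.single i (1 : ℝ) = S12.ee i := fun _ => rfl
  calc ∑ i : Fin n, fderiv ℝ (fun y => ∑ j : Fin n,
          aCoef p v y i j * pder j (fun z => ‖gradient v z‖ ^ p) y) x
          (EuclideanSpace.single i (1 : ℝ))
      = ∑ i : Fin n, p * ∑ k, (pder2 i k v x * fderiv ℝ (S12.Phi p v i) x (S12.ee k)
          + pder k v x * fderiv ℝ (fun z => fderiv ℝ (S12.Phi p v i) z (S12.ee k)) x (S12.ee i)) := by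
        refine Finset.sum_congr rfl fun i _ => ?_
        rw [hee i, hstep1 i, hstep2 i]
    _ = p * ∑ i, ∑ k, pder2 i k v x * fderiv ℝ (S12.Phi p v i) x (S12.ee k)
        + p * ∑ k, pder k v x *
            (∑ i, fderiv ℝ (fun z => fderiv ℝ (S12.Phi p v i) z (S12.ee k)) x (S12.ee i)) := by
        rw [← Finset.mul_sum, ← mul_add]
        congr 1
        rw [Finset.sum_congr rfl fun i (_ : i ∈ Finset.univ) => Finset.sum_add_distrib,
          Finset.sum_add_distrib]
        congr 1
        rw [Finset.sum_comm]
        exact Finset.sum_congr rfl fun k _ => by rw [Finset.mul_sum]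
    _ = p * ∑ i, ∑ k, pder2 i k v x * fderiv ℝ (S12.Phi p v i) x (S12.ee k) := by
        have hzero : ∑ k, pder k v x *
            (∑ i, fderiv ℝ (fun z => fderiv ℝ (S12.Phi p v i) z (S12.ee k)) x (S12.ee i)) = 0 :=
          Finset.sum_eq_zero fun k _ => by rw [hvanish k, mul_zero]
        rw [hzero, mul_zero, add_zero]
    _ = p * ∑ i : Fin n, ∑ j : Fin n,
          ACoef p v x i j * ∑ k : Fin n, pder2 k j v x * pder2 k i v x := by
        rw [S12.lhs_canonical hU hv hx hgx, ← S12.rhs_canonical (p := p) (v := v) (y := x)]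
end
end

section
/- Let Ω ⊂ ℝⁿ be a connected open set and let v : Ω → ℝ be a harmonic function (Δv = 0) with |∇v(x)| = 1 for every x ∈ Ω. Then there exist a unit vector a ∈ ℝⁿ and a constant b ∈ ℝ such that v(x) = a·x + b for all x ∈ Ω. -/
open Set Filter
open scoped BigOperators Topology

noncomputable section

theorem aux_const  {E F : Type*} [NormedAddCommGroup E] [NormedSpace ℝ E]
    [NormedAddCommGroup F] [NormedSpace ℝ F] {Ω : Set E} (hΩo : IsOpen Ω)
    (hΩc : IsPreconnected Ω) {f : E → F} (hf : ∀ x ∈ Ω, DifferentiableAt ℝ f x)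
    (hz : ∀ x ∈ Ω, fderiv ℝ f x = 0) {q : E} (hq : q ∈ Ω) : ∀ x ∈ Ω, f x = f q := by
  have hloc : ∀ x ∈ Ω, ∃ ε > 0, Metric.ball x ε ⊆ Ω ∧ ∀ y ∈ Metric.ball x ε, f y = f x := by
    intro x hx
    obtain ⟨ε, hε, hball⟩ := Metric.isOpen_iff.1 hΩo x hx
    refine ⟨ε, hε, hball, fun y hy => ?_⟩
    refine (convex_ball x ε).is_const_of_fderivWithin_eq_zero
      (fun z hz' => (hf z (hball hz')).differentiableWithinAt) (fun z hz' => ?_) hy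
      (Metric.mem_ball_self hε)
    rw [fderivWithin_of_isOpen Metric.isOpen_ball hz']
    exact hz z (hball hz')
  set U := {x | x ∈ Ω ∧ f x = f q} with hUdef
  have hU : IsOpen U := by
    rw [Metric.isOpen_iff]
    rintro x ⟨hx, hfx⟩
    obtain ⟨ε, hε, hb, hc⟩ := hloc x hx
    exact ⟨ε, hε, fun y hy => ⟨hb hy, (hc y hy).trans hfx⟩⟩
  have hV : IsOpen (Ω ∩ f ⁻¹' {f q}ᶜ) := by
    refine ContinuousOn.isOpen_inter_preimage ?_ hΩo (isOpen_compl_singleton)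
    exact fun x hx => (hf x hx).continuousAt.continuousWithinAt
  have hsub : Ω ⊆ U ∪ (Ω ∩ f ⁻¹' {f q}ᶜ) := by
    intro x hx
    by_cases h : f x = f q
    · exact Or.inl ⟨hx, h⟩
    · exact Or.inr ⟨hx, h⟩
  have hdisj : Disjoint U (Ω ∩ f ⁻¹' {f q}ᶜ) := by
    rw [Set.disjoint_left]
    rintro x ⟨_, h⟩ ⟨_, h'⟩
    exact h' h
  have := hΩc.subset_left_of_subset_union hU hV hdisj hsub ⟨q, hq, hq, rfl⟩
  exact fun x hx => (this hx).2


/-- a harmonic function with |∇v| ≡ 1 on a connected open set is affine. -/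
theorem statement_13 (n : ℕ) (Ω : Set (EuclideanSpace ℝ (Fin n))) (hΩo : IsOpen Ω) (hΩc : IsConnected Ω)
    (v : EuclideanSpace ℝ (Fin n) → ℝ) (hv : ContDiffOn ℝ 2 v Ω)
    (hharm : ∀ x ∈ Ω, ∑ i : Fin n, pder2 i i v x = 0)
    (hgrad : ∀ x ∈ Ω, ‖gradient v x‖ = 1) :
    ∃ (a : EuclideanSpace ℝ (Fin n)) (b : ℝ), ‖a‖ = 1 ∧ ∀ x ∈ Ω, v x = (inner ℝ a x : ℝ) + b := by
  set g : EuclideanSpace ℝ (Fin n) → EuclideanSpace ℝ (Fin n) := fun x => gradient v x with hgdef'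
  -- fderiv v x y = ⟪g x, y⟫
  have hgdef : ∀ x y, fderiv ℝ v x y = (inner ℝ (g x) y : ℝ) := by
    intro x y
    rw [hgdef']
    rw [← InnerProductSpace.toDual_apply_apply]
    simp [gradient]
  -- coordinates of g
  have hgcoord : ∀ x i, g x i = fderiv ℝ v x (EuclideanSpace.single i 1) := by
    intro x i
    rw [hgdef, EuclideanSpace.inner_single_right]
    simp
  -- fderiv v is C¹ on Ω
  have hdv1 : ContDiffOn ℝ 1 (fderiv ℝ v) Ω := hv.fderiv_of_isOpen hΩo (by norm_num)
  -- g is C¹ on Ω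
  have hg1 : ContDiffOn ℝ 1 g Ω := by
    rw [contDiffOn_euclidean]
    intro i
    have : (fun x => g x i) = fun x => fderiv ℝ v x (EuclideanSpace.single i 1) := by
      ext x; exact hgcoord x i
    rw [this]
    exact hdv1.clm_apply contDiffOn_const
  have hgd : ∀ x ∈ Ω, DifferentiableAt ℝ g x := fun x hx =>
    (hg1.contDiffAt (hΩo.mem_nhds hx)).differentiableAt one_ne_zero
  have hdvd : ∀ x ∈ Ω, DifferentiableAt ℝ (fderiv ℝ v) x := fun x hx =>
    (hdv1.contDiffAt (hΩo.mem_nhds hx)).differentiableAt one_ne_zero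
  have hvd : ∀ x ∈ Ω, DifferentiableAt ℝ v x := fun x hx =>
    (hv.contDiffAt (hΩo.mem_nhds hx)).differentiableAt (by norm_num)
  -- continuity of x ↦ fderiv g x on Ω
  have hDGcont : ContinuousOn (fun x => fderiv ℝ g x) Ω :=
    hg1.continuousOn_fderiv_of_isOpen hΩo le_rfl
  -- second derivative identification
  have hD2 : ∀ x ∈ Ω, ∀ u w, (inner ℝ (fderiv ℝ g x u) w : ℝ) = fderiv ℝ (fderiv ℝ v) x u w := by
    intro x hx u w
    have e1 : fderiv ℝ (fun y => (inner ℝ (g y) w : ℝ)) x u = inner ℝ (fderiv ℝ g x u) w := by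
      rw [fderiv_inner_apply ℝ (hgd x hx) (differentiableAt_const w) u]
      simp
    have e2 : (fun y => (inner ℝ (g y) w : ℝ)) = fun y => fderiv ℝ v y w := by
      ext y; rw [hgdef]
    have e3 : fderiv ℝ (fun y => fderiv ℝ v y w) x u = fderiv ℝ (fderiv ℝ v) x u w := by
      have : (fun y => fderiv ℝ v y w) =
          (fun T : EuclideanSpace ℝ (Fin n) →L[ℝ] ℝ => T w) ∘ (fderiv ℝ v) := rfl
      rw [this, show (fun T : EuclideanSpace ℝ (Fin n) →L[ℝ] ℝ => T w)
        = (ContinuousLinearMap.apply ℝ ℝ w : (EuclideanSpace ℝ (Fin n) →L[ℝ] ℝ) →L[ℝ] ℝ) from rfl,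
        fderiv_comp x (ContinuousLinearMap.apply ℝ ℝ w).differentiableAt (hdvd x hx)]
      simp
    rw [← e1, e2, e3]
  -- symmetry
  have hsym : ∀ x ∈ Ω, ∀ u w, (inner ℝ (fderiv ℝ g x u) w : ℝ) = inner ℝ (fderiv ℝ g x w) u := by
    intro x hx u w
    have hs := (hv.contDiffAt (hΩo.mem_nhds hx)).isSymmSndFDerivAt (by simp)
    rw [hD2 x hx u w, hD2 x hx w u, hs.eq u w]
  -- B g = 0
  have hBg : ∀ x ∈ Ω, fderiv ℝ g x (g x) = 0 := by
    intro x hx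
    have hiz : ∀ u, (inner ℝ (fderiv ℝ g x u) (g x) : ℝ) = 0 := by
      intro u
      have hev : (fun y => (inner ℝ (g y) (g y) : ℝ)) =ᶠ[𝓝 x] fun _ => (1 : ℝ) := by
        filter_upwards [hΩo.mem_nhds hx] with y hy
        rw [real_inner_self_eq_norm_sq, hgrad y hy]; norm_num
      have h0 : fderiv ℝ (fun y => (inner ℝ (g y) (g y) : ℝ)) x = 0 := by
        rw [hev.fderiv_eq, fderiv_const_apply]
      have := fderiv_inner_apply ℝ (hgd x hx) (hgd x hx) u
      rw [h0] at this
      simp only [ContinuousLinearMap.zero_apply] at this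
      have hcomm : (inner ℝ (g x) (fderiv ℝ g x u) : ℝ) = inner ℝ (fderiv ℝ g x u) (g x) :=
        real_inner_comm _ _
      linarith [this, hcomm.symm ▸ this]
    have : (inner ℝ (fderiv ℝ g x (g x)) (fderiv ℝ g x (g x)) : ℝ) = 0 := by
      rw [hsym x hx]
      exact hiz _
    exact inner_self_eq_zero.1 this
  -- trace of B is 0
  have htr : ∀ x ∈ Ω, ∑ i : Fin n, fderiv ℝ g x (EuclideanSpace.single i 1) i = 0 := by
    intro x hx
    have := hharm x hx
    have hp2 : ∀ i : Fin n, pder2 i i v x = fderiv ℝ g x (EuclideanSpace.single i 1) i := by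
      intro i
      unfold pder2
      have e2 : (fun y => pder i v y) = fun y => g y i := by
        ext y; unfold pder; rw [hgcoord]
      rw [e2]
      have : (fun y => g y i) = (EuclideanSpace.proj i : EuclideanSpace ℝ (Fin n) →L[ℝ] ℝ) ∘ g := rfl
      rw [this, fderiv_comp x (EuclideanSpace.proj i).differentiableAt (hgd x hx)]
      rw [ContinuousLinearMap.fderiv]; rfl
    rw [Finset.sum_congr rfl fun i _ => hp2 i] at this
    exact this
  -- MAIN: Hessian vanishes everywhere
  have hA0 : ∀ q ∈ Ω, fderiv ℝ g q = 0 := by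
    intro q hq
    obtain ⟨r, hr0, hrb⟩ := Metric.isOpen_iff.1 hΩo q hq
    set R := r / 3 with hR
    have hR0 : 0 < R := by positivity
    have hsub : Metric.closedBall q (2 * R) ⊆ Ω := by
      intro y hy
      apply hrb
      rw [Metric.mem_ball]
      have := Metric.mem_closedBall.1 hy
      rw [hR] at *
      linarith
    obtain ⟨K, hK⟩ := (isCompact_closedBall q (2 * R)).exists_bound_of_continuousOn
      (hDGcont.mono hsub)
    -- g is constant along its own gradient lines
    have key : ∀ x ∈ Metric.ball q R, ∀ t : ℝ, |t| ≤ R → g (x + t • g x) = g x := by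
      intro x hx
      have hxΩ : x ∈ Ω := hsub (Metric.closedBall_subset_closedBall (by linarith) 
        (Metric.ball_subset_closedBall hx))
      have hns : ‖g x‖ = 1 := hgrad x hxΩ
      have hmem : ∀ u : ℝ, |u| ≤ R → x + u • g x ∈ Metric.closedBall q (2 * R) := by
        intro u hu
        rw [Metric.mem_closedBall, dist_eq_norm]
        have : x + u • g x - q = (x - q) + u • g x := by abel
        rw [this]
        calc ‖(x - q) + u • g x‖ ≤ ‖x - q‖ + ‖u • g x‖ := norm_add_le _ _
          _ ≤ R + R := by
              refine add_le_add ?_ ?_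
              · exact le_of_lt (by rw [← dist_eq_norm]; exact Metric.mem_ball.1 hx)
              · rw [norm_smul, hns, mul_one]; exact hu
          _ = 2 * R := by ring
      suffices hσ : ∀ σ : ℝ, |σ| = 1 → ∀ τ ∈ Icc (0:ℝ) R, g (x + (σ * τ) • g x) = g x by
        intro t ht
        rcases le_or_gt 0 t with h | h
        · have := hσ 1 (by norm_num) t ⟨h, by rwa [abs_of_nonneg h] at ht⟩
          simpa using this
        · have := hσ (-1) (by norm_num) (-t) ⟨by linarith, by rwa [abs_of_neg h] at ht⟩
          simp only [neg_mul, one_mul, neg_neg] at this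
          exact this
      intro σ hσ
      set s := g x with hs
      set c : ℝ → EuclideanSpace ℝ (Fin n) := fun τ => x + (σ * τ) • s with hc
      set f : ℝ → EuclideanSpace ℝ (Fin n) := fun τ => g (c τ) - s with hf
      have hcmem : ∀ τ ∈ Icc (0:ℝ) R, c τ ∈ Metric.closedBall q (2 * R) := by
        intro τ hτ
        apply hmem
        rw [abs_mul, hσ, one_mul, abs_of_nonneg hτ.1]
        exact hτ.2
      have hcΩ : ∀ τ ∈ Icc (0:ℝ) R, c τ ∈ Ω := fun τ hτ => hsub (hcmem τ hτ)
      have hccont : Continuous c := by fun_prop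
      have hfc : ContinuousOn f (Icc 0 R) :=
        ((hg1.continuousOn.comp hccont.continuousOn hcΩ).sub continuousOn_const)
      have hderiv : ∀ τ ∈ Ico (0:ℝ) R,
          HasDerivWithinAt f (σ • (fderiv ℝ g (c τ) s)) (Ici τ) τ := by
        intro τ hτ
        have hτ' : τ ∈ Icc (0:ℝ) R := ⟨hτ.1, le_of_lt hτ.2⟩
        have hcd : HasDerivAt c (σ • s) τ := by
          have h1 : (fun τ : ℝ => (σ * τ) • s) = fun τ : ℝ => τ • (σ • s) := by
            ext τ; rw [smul_smul, mul_comm]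
          have h2 : HasDerivAt (fun τ : ℝ => τ • (σ • s)) (σ • s) τ := by
            simpa using (hasDerivAt_id τ).smul_const (σ • s)
          rw [hc]
          exact ((h1 ▸ h2).const_add x)
        have hgfd := (hgd _ (hcΩ τ hτ')).hasFDerivAt
        have hcomp := hgfd.comp_hasDerivAt τ hcd
        have : HasDerivAt f (fderiv ℝ g (c τ) (σ • s)) τ := by
          simpa [hf, Function.comp] using hcomp.sub_const s
        rw [map_smul] at this
        exact this.hasDerivWithinAt
      have hbound : ∀ τ ∈ Ico (0:ℝ) R, ‖σ • (fderiv ℝ g (c τ) s)‖ ≤ K * ‖f τ‖ + 0 := by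
        intro τ hτ
        have hτ' : τ ∈ Icc (0:ℝ) R := ⟨hτ.1, le_of_lt hτ.2⟩
        have h1 : fderiv ℝ g (c τ) s = fderiv ℝ g (c τ) (s - g (c τ)) := by
          rw [map_sub, hBg _ (hcΩ τ hτ'), sub_zero]
        rw [norm_smul, Real.norm_eq_abs, hσ, one_mul, h1, add_zero]
        calc ‖fderiv ℝ g (c τ) (s - g (c τ))‖
            ≤ ‖fderiv ℝ g (c τ)‖ * ‖s - g (c τ)‖ := ContinuousLinearMap.le_opNorm _ _
          _ ≤ K * ‖f τ‖ := by
              rw [show ‖s - g (c τ)‖ = ‖f τ‖ from by rw [hf]; exact (norm_sub_rev _ _)]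
              exact mul_le_mul_of_nonneg_right (hK _ (hcmem τ hτ')) (norm_nonneg _)
      have h00 : ‖f 0‖ ≤ 0 := by simp [hf, hc, hs]
      have hgron := norm_le_gronwallBound_of_norm_deriv_right_le hfc hderiv h00 hbound
      intro τ hτ
      have h2 := hgron τ hτ
      rw [gronwallBound_ε0, zero_mul] at h2
      have : f τ = 0 := norm_le_zero_iff.1 h2
      rw [hf] at this
      exact sub_eq_zero.1 this
    set a := g q with ha
    set A := fderiv ℝ g q with hA
    have hna : ‖a‖ = 1 := hgrad q hq
    have haΩ : ∀ t : ℝ, |t| ≤ R → q + t • a ∈ Ω := by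
      intro t ht
      apply hsub
      rw [Metric.mem_closedBall, dist_eq_norm]
      have h1 : q + t • a - q = t • a := by abel
      rw [h1, norm_smul, hna, mul_one, Real.norm_eq_abs]
      linarith
    have hcomp : ∀ t : ℝ, |t| ≤ R →
        (fderiv ℝ g (q + t • a)).comp (ContinuousLinearMap.id ℝ _ + t • A) = A := by
      intro t ht
      have hev : (fun x => g (x + t • g x)) =ᶠ[𝓝 q] g :=
        eventuallyEq_of_mem (Metric.isOpen_ball.mem_nhds (Metric.mem_ball_self hR0))
          (fun x hx => key x hx t ht)
      have hh : DifferentiableAt ℝ (fun x => x + t • g x) q :=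
        differentiableAt_id.add ((hgd q hq).const_smul t)
      have hgdy : DifferentiableAt ℝ g (q + t • a) := hgd _ (haΩ t ht)
      have hchain : fderiv ℝ (fun x => g (x + t • g x)) q
          = (fderiv ℝ g (q + t • a)).comp (fderiv ℝ (fun x => x + t • g x) q) :=
        fderiv_comp (g := g) (f := fun x => x + t • g x) q hgdy hh
      have hfh : fderiv ℝ (fun x => x + t • g x) q = ContinuousLinearMap.id ℝ _ + t • A := by
        have hfa : HasFDerivAt (fun x => x + t • g x)
            (ContinuousLinearMap.id ℝ _ + t • A) q :=
          (hasFDerivAt_id q).add (((hgd q hq).hasFDerivAt).const_smul t)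
        exact hfa.fderiv
      rw [← hfh, ← hchain, hev.fderiv_eq, hA]
    have hS : ∀ t : ℝ, 0 < t → t ≤ R →
        ∑ i : Fin n, (fderiv ℝ g (q + t • a)) (A (EuclideanSpace.single i 1)) i = 0 := by
      intro t ht0 htR
      have habs : |t| ≤ R := by rw [abs_of_pos ht0]; exact htR
      have h1 := hcomp t habs
      have h2 : ∀ i : Fin n, A (EuclideanSpace.single i 1) i
          = (fderiv ℝ g (q + t • a)) (EuclideanSpace.single i 1) i
            + t * (fderiv ℝ g (q + t • a)) (A (EuclideanSpace.single i 1)) i := by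
        intro i
        conv_lhs => rw [← h1]
        simp [ContinuousLinearMap.comp_apply, ContinuousLinearMap.add_apply,
          ContinuousLinearMap.smul_apply, map_add, map_smul, PiLp.add_apply, PiLp.smul_apply,
          smul_eq_mul]
      have h3 := htr q hq
      rw [show ∑ i : Fin n, A (EuclideanSpace.single i 1) i
          = ∑ i : Fin n, ((fderiv ℝ g (q + t • a)) (EuclideanSpace.single i 1) i
            + t * (fderiv ℝ g (q + t • a)) (A (EuclideanSpace.single i 1)) i)
          from Finset.sum_congr rfl fun i _ => h2 i, Finset.sum_add_distrib,
        htr _ (haΩ t habs), ← Finset.mul_sum, zero_add] at h3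
      exact (mul_eq_zero.1 h3).resolve_left (ne_of_gt ht0)
    -- limit as t → 0⁺
    have hScont : Tendsto (fun t : ℝ =>
        ∑ i : Fin n, (fderiv ℝ g (q + t • a)) (A (EuclideanSpace.single i 1)) i) (𝓝 0)
        (𝓝 (∑ i : Fin n, A (A (EuclideanSpace.single i 1)) i)) := by
      have hFcont : ContinuousOn (fun y =>
          ∑ i : Fin n, (fderiv ℝ g y) (A (EuclideanSpace.single i 1)) i) Ω := by
        apply continuousOn_finset_sum
        intro i _
        have h1 : ContinuousOn (fun y => (fderiv ℝ g y) (A (EuclideanSpace.single i 1))) Ω :=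
          hDGcont.clm_apply continuousOn_const
        exact (EuclideanSpace.proj i).continuous.comp_continuousOn h1
      have hFat : ContinuousAt (fun y =>
          ∑ i : Fin n, (fderiv ℝ g y) (A (EuclideanSpace.single i 1)) i) q :=
        hFcont.continuousAt (hΩo.mem_nhds hq)
      have htend : Tendsto (fun t : ℝ => q + t • a) (𝓝 0) (𝓝 q) := by
        have hcc : Continuous (fun t : ℝ => q + t • a) := by fun_prop
        simpa using hcc.tendsto (0 : ℝ)
      exact hFat.tendsto.comp htend
    have hS0 : ∑ i : Fin n, A (A (EuclideanSpace.single i 1)) i = 0 := by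
      have hlim1 : Tendsto (fun t : ℝ =>
          ∑ i : Fin n, (fderiv ℝ g (q + t • a)) (A (EuclideanSpace.single i 1)) i)
          (𝓝[>] 0) (𝓝 (∑ i : Fin n, A (A (EuclideanSpace.single i 1)) i)) :=
        hScont.mono_left nhdsWithin_le_nhds
      have hev0 : (fun t : ℝ =>
          ∑ i : Fin n, (fderiv ℝ g (q + t • a)) (A (EuclideanSpace.single i 1)) i)
          =ᶠ[𝓝[>] 0] fun _ => (0:ℝ) := by
        filter_upwards [Ioo_mem_nhdsGT_of_mem (show (0:ℝ) ∈ Ico 0 R from ⟨le_rfl, hR0⟩)]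
          with t ht
        exact hS t ht.1 (le_of_lt ht.2)
      have hlim2 : Tendsto (fun t : ℝ =>
          ∑ i : Fin n, (fderiv ℝ g (q + t • a)) (A (EuclideanSpace.single i 1)) i)
          (𝓝[>] 0) (𝓝 0) := Tendsto.congr' hev0.symm tendsto_const_nhds
      exact tendsto_nhds_unique hlim1 hlim2
    -- from tr(A²)=0 and symmetry conclude A = 0
    have hAe : ∀ i : Fin n, A (EuclideanSpace.single i 1) = 0 := by
      have hterm : ∀ i : Fin n, A (A (EuclideanSpace.single i 1)) i
          = (inner ℝ (A (EuclideanSpace.single i 1)) (A (EuclideanSpace.single i 1)) : ℝ) := by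
        intro i
        have h1 : A (A (EuclideanSpace.single i 1)) i
            = (inner ℝ (A (A (EuclideanSpace.single i 1))) (EuclideanSpace.single i 1) : ℝ) := by
          rw [EuclideanSpace.inner_single_right]; simp
        rw [h1, hsym q hq]
      rw [Finset.sum_congr rfl fun i _ => hterm i] at hS0
      intro i
      have hz := (Finset.sum_eq_zero_iff_of_nonneg
        (fun i _ => real_inner_self_nonneg)).1 hS0 i (Finset.mem_univ i)
      exact inner_self_eq_zero.1 hz
    apply ContinuousLinearMap.ext
    intro u
    have hcoord : ∀ j : Fin n, A u j = 0 := by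
      intro j
      have h1 : A u j = (inner ℝ (A u) (EuclideanSpace.single j 1) : ℝ) := by
        rw [EuclideanSpace.inner_single_right]; simp
      rw [h1, hsym q hq, hAe j]
      simp
    have : A u = 0 := by
      ext j
      simpa using hcoord j
    simpa using this
  -- conclusion: g is constant, v is affine
  obtain ⟨q₀, hq₀⟩ := hΩc.nonempty
  have hgconst : ∀ x ∈ Ω, g x = g q₀ := aux_const hΩo hΩc.isPreconnected hgd hA0 hq₀
  set a := g q₀ with ha
  have ha1 : ‖a‖ = 1 := hgrad q₀ hq₀
  have hfd : ∀ x ∈ Ω, DifferentiableAt ℝ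
      (fun x : EuclideanSpace ℝ (Fin n) => v x - (inner ℝ a x : ℝ)) x := by
    intro x hx
    exact (hvd x hx).sub ((innerSL ℝ a).differentiableAt)
  have hfz : ∀ x ∈ Ω, fderiv ℝ
      (fun x : EuclideanSpace ℝ (Fin n) => v x - (inner ℝ a x : ℝ)) x = 0 := by
    intro x hx
    have hdin : DifferentiableAt ℝ
        (fun x : EuclideanSpace ℝ (Fin n) => (inner ℝ a x : ℝ)) x :=
      (innerSL ℝ a).differentiableAt
    ext u
    rw [fderiv_fun_sub (hvd x hx) hdin]
    have h1 : fderiv ℝ (fun x : EuclideanSpace ℝ (Fin n) => (inner ℝ a x : ℝ)) x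
        = innerSL ℝ a := (innerSL ℝ a).fderiv
    simp only [ContinuousLinearMap.sub_apply, ContinuousLinearMap.zero_apply, h1,
      innerSL_apply_apply]
    rw [hgdef, hgconst x hx]
    exact sub_self _
  have hvconst := aux_const hΩo hΩc.isPreconnected hfd hfz hq₀
  refine ⟨a, v q₀ - (inner ℝ a q₀ : ℝ), ha1, fun x hx => ?_⟩
  have h := hvconst x hx
  linarith [h]
end
end

section
/- Let 1 < p < ∞, let Ω ⊂ ℝⁿ be open and connected, f ∈ C¹(ℝ), and let u ∈ C³(Ω) satisfy div(|∇u|^{p−2}∇u) + f(u) = 0 in Ω. Let F ∈ C²(ℝ) be a primitive of f, let α̂ ∈ ℝ be a constant, and suppose that Q(x) := ((p−1)/p)|∇u(x)|^p + F(u(x)) = α̂ for all x ∈ Ω and α̂ > F(u(x)) for all x ∈ Ω. Fix u₀ ∈ u(Ω) and define G(s) = ((p−1)/p)^{1/p} ∫_{u₀}^{s} (α̂ − F(t))^{−1/p} dt and v = G∘u. Then v satisfies div(|∇v|^{p−2}∇v) = 0 and |∇v(x)| = 1 for all x ∈ Ω; consequently v is harmonic in Ω. -/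
open Set Filter
open scoped BigOperators Topology

noncomputable section

/-- The function v = G ∘ u, where G(s) = ((p-1)/p)^{1/p} ∫_{u₀}^s (α - F(t))^{-1/p} dt. -/
def Gcomp {n : ℕ} (p α u₀ : ℝ) (F : ℝ → ℝ) (u : EuclideanSpace ℝ (Fin n) → ℝ) (y : EuclideanSpace ℝ (Fin n)) : ℝ :=
  ((p - 1) / p) ^ (1 / p) * ∫ t in u₀..(u y), (α - F t) ^ (-(1 / p))

/-- when Q ≡ α̂ and α̂ > F∘u on Ω, the function v = G∘u is p-harmonic with
|∇v| ≡ 1, and hence harmonic. -/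
theorem statement_14 (n : ℕ) (p : ℝ) (hp : 1 < p)
    (Ω : Set (EuclideanSpace ℝ (Fin n))) (hΩo : IsOpen Ω) (hΩc : IsConnected Ω)
    (f : ℝ → ℝ) (hf : ContDiff ℝ 1 f)
    (u : EuclideanSpace ℝ (Fin n) → ℝ) (hu : ContDiffOn ℝ 3 u Ω)
    (heq : ∀ x ∈ Ω, pLaplacian p u x + f (u x) = 0)
    (F : ℝ → ℝ) (hF : ContDiff ℝ 2 F) (hFf : IsPrimitive F f)
    (α : ℝ) (hQ : ∀ x ∈ Ω, Qfun p F u x = α)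
    (hα : ∀ x ∈ Ω, F (u x) < α)
    (u₀ : ℝ) (hu₀ : u₀ ∈ u '' Ω) :
    ∀ x ∈ Ω,
      pLaplacian p (Gcomp p α u₀ F u) x = 0 ∧
      ‖gradient (Gcomp p α u₀ F u) x‖ = 1 ∧
      (∑ i : Fin n, pder2 i i (Gcomp p α u₀ F u) x) = 0 := by
  classical
  have hp0 : (0:ℝ) < p := lt_trans one_pos hp
  have hp1 : (0:ℝ) < p - 1 := by linarith
  set b : ℝ := (p - 1) / p with hb_def
  have hb : 0 < b := div_pos hp1 hp0
  set c : ℝ := b ^ (1 / p) with hc_def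
  have hc : 0 < c := Real.rpow_pos_of_pos hb _
  set h : ℝ → ℝ := fun t => (α - F t) ^ (-(1 / p)) with hh_def
  set r : ℝ := (1 - p) / p with hr_def
  set Cc : ℝ := b ^ ((p - 1) / p) with hCc_def
  have hCc : 0 < Cc := Real.rpow_pos_of_pos hb _
  set ψ : (EuclideanSpace ℝ (Fin n)) → ℝ := fun y => Cc * (α - F (u y)) ^ r with hψ_def
  set g : Fin n → (EuclideanSpace ℝ (Fin n)) → ℝ :=
    fun i y => ‖gradient u y‖ ^ (p - 2) * gradient u y i with hg_def
  have hud : DifferentiableOn ℝ u Ω := hu.differentiableOn (by norm_num)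
  have hdu : ∀ y ∈ Ω, DifferentiableAt ℝ u y := fun y hy =>
    (hud y hy).differentiableAt (hΩo.mem_nhds hy)
  -- coordinates of the gradient
  have hgrad_coord : ∀ (φ : EuclideanSpace ℝ (Fin n) → ℝ) (y : EuclideanSpace ℝ (Fin n))
      (i : Fin n), fderiv ℝ φ y (EuclideanSpace.single i 1) = gradient φ y i := by
    intro φ y i
    have h1 : fderiv ℝ φ y = (InnerProductSpace.toDual ℝ _) (gradient φ y) := by
      rw [gradient, (InnerProductSpace.toDual ℝ _).apply_symm_apply]
    rw [h1, InnerProductSpace.toDual_apply_apply, EuclideanSpace.inner_single_right]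
    simp
  -- the set where the integrand is nice
  set U : Set ℝ := {t | F t < α} with hU_def
  have hUo : IsOpen U := isOpen_lt hF.continuous continuous_const
  have hhU : ContinuousOn h U := by
    intro t ht
    have ht' : (0:ℝ) < α - F t := sub_pos.2 ht
    have h1 : ContinuousAt (fun s : ℝ => s ^ (-(1 / p))) (α - F t) :=
      Real.continuousAt_rpow_const _ _ (Or.inl ht'.ne')
    have h2 : ContinuousAt (fun t : ℝ => α - F t) t :=
      (continuous_const.sub hF.continuous).continuousAt
    exact (ContinuousAt.comp (f := fun t : ℝ => α - F t) h1 h2).continuousWithinAt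
  have himg : u '' Ω ⊆ U := by rintro t ⟨y, hy, rfl⟩; exact hα y hy
  have hordc : OrdConnected (u '' Ω) :=
    ((hΩc.image u hud.continuousOn).isPreconnected).ordConnected
  -- derivative of v = G ∘ u
  have hkey : ∀ y ∈ Ω, HasFDerivAt (Gcomp p α u₀ F u) ((c * h (u y)) • fderiv ℝ u y) y := by
    intro y hy
    have huyU : u y ∈ U := himg ⟨y, hy, rfl⟩
    have hsub : uIcc u₀ (u y) ⊆ U := fun t ht => himg (hordc.uIcc_subset hu₀ ⟨y, hy, rfl⟩ ht)
    have hInt : IntervalIntegrable h MeasureTheory.volume u₀ (u y) :=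
      (hhU.mono (fun t ht => hsub ht)).intervalIntegrable
    have hmeas : StronglyMeasurableAtFilter h (𝓝 (u y)) MeasureTheory.volume :=
      ContinuousOn.stronglyMeasurableAtFilter hUo hhU (u y) huyU
    have hca : ContinuousAt h (u y) := hhU.continuousAt (hUo.mem_nhds huyU)
    have hG : HasDerivAt (fun s => ∫ t in u₀..s, h t) (h (u y)) (u y) :=
      intervalIntegral.integral_hasDerivAt_right hInt hmeas hca
    have hGc : HasDerivAt (fun s => c * ∫ t in u₀..s, h t) (c * h (u y)) (u y) := hG.const_mul c
    exact hGc.comp_hasFDerivAt y (hdu y hy).hasFDerivAt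
  have hgradv : ∀ y ∈ Ω,
      gradient (Gcomp p α u₀ F u) y = (c * h (u y)) • gradient u y := by
    intro y hy
    rw [gradient, gradient, (hkey y hy).fderiv, map_smul]
  -- norm relations
  have hwkey : ∀ y ∈ Ω, ‖gradient u y‖ ^ p = b⁻¹ * (α - F (u y)) := by
    intro y hy
    have hq := hQ y hy
    rw [Qfun, ← hb_def] at hq
    rw [eq_inv_mul_iff_mul_eq₀ hb.ne']
    linarith
  have hwpos : ∀ y ∈ Ω, 0 < ‖gradient u y‖ := by
    intro y hy
    rcases (norm_nonneg (gradient u y)).lt_or_eq with h' | h'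
    · exact h'
    · exfalso
      have he : 0 < α - F (u y) := sub_pos.2 (hα y hy)
      have h0 : ‖gradient u y‖ ^ p = 0 := by rw [← h', Real.zero_rpow hp0.ne']
      have h1 := hwkey y hy
      have h2 : 0 < b⁻¹ * (α - F (u y)) := mul_pos (inv_pos.2 hb) he
      rw [h0] at h1
      linarith
  have hlw : ∀ y ∈ Ω, Real.log ‖gradient u y‖ =
      (Real.log (α - F (u y)) - Real.log b) / p := by
    intro y hy
    have hw := hwpos y hy
    have he : 0 < α - F (u y) := sub_pos.2 (hα y hy)
    have h1 := congrArg Real.log (hwkey y hy)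
    rw [Real.log_rpow hw, Real.log_mul (inv_ne_zero hb.ne') he.ne', Real.log_inv] at h1
    field_simp
    linarith
  -- the product c * h (u y) * ‖∇u y‖ equals 1
  have hchw : ∀ y ∈ Ω, c * h (u y) * ‖gradient u y‖ = 1 := by
    intro y hy
    have hw := hwpos y hy
    have he : 0 < α - F (u y) := sub_pos.2 (hα y hy)
    have hlw' := hlw y hy
    simp only [hh_def, hc_def]
    rw [Real.rpow_def_of_pos hb, Real.rpow_def_of_pos he, ← Real.exp_log hw,
      ← Real.exp_add, ← Real.exp_add]
    rw [show (1:ℝ) = Real.exp 0 from (Real.exp_zero).symm]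
    congr 1
    rw [hlw']
    simp only [Real.exp_zero]
    field_simp
    ring
  have hnormv : ∀ y ∈ Ω, ‖gradient (Gcomp p α u₀ F u) y‖ = 1 := by
    intro y hy
    have he : 0 < α - F (u y) := sub_pos.2 (hα y hy)
    have hhpos : 0 < h (u y) := by
      simp only [hh_def]; exact Real.rpow_pos_of_pos he _
    rw [hgradv y hy, norm_smul, Real.norm_eq_abs,
      abs_of_pos (mul_pos hc hhpos), hchw y hy]
  -- coefficient identity: ψ y * ‖∇u y‖^(p-2) = c * h (u y)
  have hcoefD : ∀ y ∈ Ω, ψ y * ‖gradient u y‖ ^ (p - 2) = c * h (u y) := by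
    intro y hy
    have hw := hwpos y hy
    have he : 0 < α - F (u y) := sub_pos.2 (hα y hy)
    have hlw' := hlw y hy
    simp only [hψ_def, hCc_def, hh_def, hc_def]
    rw [Real.rpow_def_of_pos hb ((p-1)/p), Real.rpow_def_of_pos he r,
      Real.rpow_def_of_pos hw (p-2), Real.rpow_def_of_pos hb (1/p),
      Real.rpow_def_of_pos he (-(1/p)), ← Real.exp_add, ← Real.exp_add, ← Real.exp_add]
    congr 1
    rw [hlw', hr_def]
    field_simp
    ring
  -- pointwise identity of the integrands on Ω
  have hint_eq : ∀ (i : Fin n), ∀ y ∈ Ω,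
      ψ y * g i y = (c * h (u y)) * gradient u y i := by
    intro i y hy
    simp only [hg_def]
    rw [show ψ y * (‖gradient u y‖ ^ (p - 2) * gradient u y i)
        = (ψ y * ‖gradient u y‖ ^ (p - 2)) * gradient u y i by ring, hcoefD y hy]
  intro x hx
  have hw := hwpos x hx
  have hex : 0 < α - F (u x) := sub_pos.2 (hα x hx)
  -- differentiability of g i at x
  have hgrad2 : ContDiffOn ℝ 2 (fun y => gradient u y) Ω := by
    have h1 : ContDiffOn ℝ 2 (fderiv ℝ u) Ω := hu.fderiv_of_isOpen hΩo (by norm_num)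
    exact (((InnerProductSpace.toDual ℝ
      (EuclideanSpace ℝ (Fin n))).symm.toContinuousLinearEquiv.toContinuousLinearMap).contDiff).comp_contDiffOn h1
  have hgdx : DifferentiableAt ℝ (fun y => gradient u y) x :=
    (hgrad2.differentiableOn (by norm_num)).differentiableAt (hΩo.mem_nhds hx)
  have hgne : gradient u x ≠ 0 := by
    intro h0; rw [h0, norm_zero] at hw; exact lt_irrefl _ hw
  have hnormd : DifferentiableAt ℝ (fun y => ‖gradient u y‖) x :=
    DifferentiableAt.norm (𝕜 := ℝ) hgdx hgne
  have hpowd : DifferentiableAt ℝ (fun y => ‖gradient u y‖ ^ (p - 2)) x :=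
    hnormd.rpow_const (Or.inl hw.ne')
  have hco : ∀ i : Fin n, DifferentiableAt ℝ (fun y => gradient u y i) x := by
    intro i
    exact (EuclideanSpace.proj i).differentiableAt.comp x hgdx
  have hgd : ∀ i : Fin n, DifferentiableAt ℝ (g i) x := by
    intro i
    simp only [hg_def]
    exact hpowd.mul (hco i)
  -- derivative of ψ at x
  have hDux : HasFDerivAt u (fderiv ℝ u x) x := (hdu x hx).hasFDerivAt
  have hFu : HasFDerivAt (fun y => F (u y)) ((f (u x)) • fderiv ℝ u x) x :=
    (hFf (u x)).comp_hasFDerivAt x hDux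
  have hE : HasFDerivAt (fun y => α - F (u y)) (-((f (u x)) • fderiv ℝ u x)) x :=
    hFu.const_sub α
  have hR : HasDerivAt (fun t : ℝ => t ^ r) (r * (α - F (u x)) ^ (r - 1)) (α - F (u x)) :=
    Real.hasDerivAt_rpow_const (Or.inl hex.ne')
  have hre : HasFDerivAt (fun y => (α - F (u y)) ^ r)
      ((r * (α - F (u x)) ^ (r - 1)) • (-((f (u x)) • fderiv ℝ u x))) x :=
    hR.comp_hasFDerivAt (h₂ := fun t : ℝ => t ^ r) x hE
  have hψd : HasFDerivAt ψ
      (Cc • ((r * (α - F (u x)) ^ (r - 1)) • (-((f (u x)) • fderiv ℝ u x)))) x := by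
    simp only [hψ_def]
    exact hre.const_mul Cc
  set K : ℝ := Cc * (r * (α - F (u x)) ^ (r - 1)) * (-(f (u x))) with hK_def
  have hψfd : ∀ i : Fin n, fderiv ℝ ψ x (EuclideanSpace.single i 1) = K * gradient u x i := by
    intro i
    rw [hψd.fderiv]
    simp only [ContinuousLinearMap.smul_apply, ContinuousLinearMap.neg_apply,
      smul_eq_mul, hK_def]
    rw [hgrad_coord u x i]
    ring
  -- the main sum
  have hSi : ∀ i : Fin n, fderiv ℝ (fun y => ψ y * g i y) x (EuclideanSpace.single i 1)
      = ψ x * (fderiv ℝ (g i) x (EuclideanSpace.single i 1))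
        + g i x * (K * gradient u x i) := by
    intro i
    rw [fderiv_fun_mul hψd.differentiableAt (hgd i)]
    simp only [ContinuousLinearMap.add_apply, ContinuousLinearMap.smul_apply, smul_eq_mul]
    rw [hψfd i]
  have hsumsq : ∑ i : Fin n, gradient u x i * gradient u x i = ‖gradient u x‖ ^ (2:ℕ) := by
    rw [← real_inner_self_eq_norm_sq]
    rw [PiLp.inner_apply]
    simp [RCLike.inner_apply, mul_comm, sq]
  have hplap : ∑ i : Fin n, fderiv ℝ (g i) x (EuclideanSpace.single i 1) = -(f (u x)) := by
    have h1 := heq x hx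
    rw [pLaplacian] at h1
    simp only [hg_def]
    linarith
  -- key scalar identity at x
  have hfinal : K * (‖gradient u x‖ ^ (p - 2) * ‖gradient u x‖ ^ (2:ℕ)) = ψ x * f (u x) := by
    have hlw' := hlw x hx
    have hww : ‖gradient u x‖ ^ (p - 2) * ‖gradient u x‖ ^ (2:ℕ) = ‖gradient u x‖ ^ p := by
      rw [← Real.rpow_natCast ‖gradient u x‖ 2, ← Real.rpow_add hw]
      norm_num
    rw [hww, hK_def]
    simp only [hψ_def]
    have hkey2 : (r * (α - F (u x)) ^ (r - 1)) * ‖gradient u x‖ ^ p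
        = -((α - F (u x)) ^ r) := by
      have hrb : r * b⁻¹ = -1 := by
        rw [hr_def, hb_def]
        field_simp [hp1.ne']
        ring
      have hpos : (α - F (u x)) ^ (r - 1) * ‖gradient u x‖ ^ p
          = b⁻¹ * (α - F (u x)) ^ r := by
        rw [Real.rpow_def_of_pos hex (r-1), Real.rpow_def_of_pos hw p,
          Real.rpow_def_of_pos hex r, hlw', show b⁻¹ = Real.exp (-(Real.log b)) by
            rw [Real.exp_neg, Real.exp_log hb], ← Real.exp_add, ← Real.exp_add]
        congr 1
        field_simp
        ring
      calc (r * (α - F (u x)) ^ (r - 1)) * ‖gradient u x‖ ^ p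
          = r * ((α - F (u x)) ^ (r - 1) * ‖gradient u x‖ ^ p) := by ring
        _ = r * (b⁻¹ * (α - F (u x)) ^ r) := by rw [hpos]
        _ = (r * b⁻¹) * (α - F (u x)) ^ r := by ring
        _ = -((α - F (u x)) ^ r) := by rw [hrb]; ring
    calc Cc * (r * (α - F (u x)) ^ (r - 1)) * (-(f (u x)))
          * (‖gradient u x‖ ^ p)
        = Cc * (-(f (u x))) * ((r * (α - F (u x)) ^ (r - 1)) * ‖gradient u x‖ ^ p) := by ring
      _ = Cc * (-(f (u x))) * (-((α - F (u x)) ^ r)) := by rw [hkey2]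
      _ = Cc * (α - F (u x)) ^ r * f (u x) := by ring
  have hS : ∑ i : Fin n, fderiv ℝ (fun y => ψ y * g i y) x (EuclideanSpace.single i 1) = 0 := by
    rw [Finset.sum_congr rfl (fun i _ => hSi i), Finset.sum_add_distrib, ← Finset.mul_sum,
      hplap]
    have h2 : ∑ i : Fin n, g i x * (K * gradient u x i)
        = K * ‖gradient u x‖ ^ (p - 2) * ∑ i : Fin n, gradient u x i * gradient u x i := by
      rw [Finset.mul_sum]
      apply Finset.sum_congr rfl
      intro i _
      simp only [hg_def]
      ring
    rw [h2, hsumsq]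
    linear_combination hfinal
  -- the three integrands agree with ψ * g i near x
  have hfd_eq : ∀ i : Fin n,
      fderiv ℝ (fun y => ‖gradient (Gcomp p α u₀ F u) y‖ ^ (p - 2)
        * gradient (Gcomp p α u₀ F u) y i) x
      = fderiv ℝ (fun y => ψ y * g i y) x := by
    intro i
    apply Filter.EventuallyEq.fderiv_eq
    filter_upwards [hΩo.mem_nhds hx] with y hy
    rw [hnormv y hy, Real.one_rpow, one_mul, hgradv y hy, hint_eq i y hy]
    simp [smul_eq_mul]
  have hfd_eq2 : ∀ i : Fin n,
      fderiv ℝ (fun y => pder i (Gcomp p α u₀ F u) y) x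
      = fderiv ℝ (fun y => ψ y * g i y) x := by
    intro i
    apply Filter.EventuallyEq.fderiv_eq
    filter_upwards [hΩo.mem_nhds hx] with y hy
    rw [pder, hgrad_coord (Gcomp p α u₀ F u) y i, hgradv y hy, hint_eq i y hy]
    simp [smul_eq_mul]
  refine ⟨?_, hnormv x hx, ?_⟩
  · rw [pLaplacian]
    rw [Finset.sum_congr rfl (fun i _ => by rw [hfd_eq i])]
    exact hS
  · simp only [pder2]
    rw [Finset.sum_congr rfl (fun i _ => by rw [hfd_eq2 i])]
    exact hS
end
end
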